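/- arXiv:math/0501300 — 6 statements merged into one kernel-verified Lean document; each statement's English description precedes it below -/
import Mathlib

section
/- Let f_1, f_2 : (0,∞) → ℝ be twice differentiable on an interval (a,b) with f_1(1) = f_2(1) = 0 and 1 ∈ (a,b), and suppose there are real constants 0 ≤ m < M such that f_2''(x) > 0 and m ≤ f_1''(x)/f_2''(x) ≤ M for all x ∈ (a,b). Then for all P, Q ∈ Γ_n with p_i/q_i ∈ (a,b) for every i, one has m · C_{f_2}(P||Q) ≤ C_{f_1}(P||Q) ≤ M · C_{f_2}(P||Q). -/
open Real Finset

lemma deriv2_comb (a b : ℝ) (c₁ c₂ : ℝ) (f₁ f₂ : ℝ → ℝ)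
    (hd₁ : ∀ x ∈ Set.Ioo a b, DifferentiableAt ℝ f₁ x ∧ DifferentiableAt ℝ (deriv f₁) x)
    (hd₂ : ∀ x ∈ Set.Ioo a b, DifferentiableAt ℝ f₂ x ∧ DifferentiableAt ℝ (deriv f₂) x)
    {x : ℝ} (hx : x ∈ Set.Ioo a b) :
    DifferentiableAt ℝ (fun y => c₁ * f₁ y + c₂ * f₂ y) x ∧
    DifferentiableAt ℝ (deriv (fun y => c₁ * f₁ y + c₂ * f₂ y)) x ∧
    deriv (deriv (fun y => c₁ * f₁ y + c₂ * f₂ y)) x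
      = c₁ * deriv (deriv f₁) x + c₂ * deriv (deriv f₂) x := by
  have hE : ∀ y ∈ Set.Ioo a b, deriv (fun z => c₁ * f₁ z + c₂ * f₂ z) y
      = c₁ * deriv f₁ y + c₂ * deriv f₂ y := by
    intro y hy
    rw [deriv_fun_add ((hd₁ y hy).1.const_mul c₁) ((hd₂ y hy).1.const_mul c₂),
      deriv_const_mul c₁ (hd₁ y hy).1, deriv_const_mul c₂ (hd₂ y hy).1]
  have hEq : deriv (fun z => c₁ * f₁ z + c₂ * f₂ z)
      =ᶠ[nhds x] fun y => c₁ * deriv f₁ y + c₂ * deriv f₂ y := by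
    filter_upwards [isOpen_Ioo.mem_nhds hx] with y hy using hE y hy
  have hdiff2 : DifferentiableAt ℝ (fun y => c₁ * deriv f₁ y + c₂ * deriv f₂ y) x :=
    ((hd₁ x hx).2.const_mul c₁).add ((hd₂ x hx).2.const_mul c₂)
  refine ⟨((hd₁ x hx).1.const_mul c₁).add ((hd₂ x hx).1.const_mul c₂),
    hdiff2.congr_of_eventuallyEq hEq, ?_⟩
  rw [Filter.EventuallyEq.deriv_eq hEq,
    deriv_fun_add ((hd₁ x hx).2.const_mul c₁) ((hd₂ x hx).2.const_mul c₂),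
    deriv_const_mul c₁ (hd₁ x hx).2, deriv_const_mul c₂ (hd₂ x hx).2]

lemma key_lemma (a b : ℝ) (g : ℝ → ℝ) (h1 : (1 : ℝ) ∈ Set.Ioo a b) (hg1 : g 1 = 0)
    (hd : ∀ x ∈ Set.Ioo a b, DifferentiableAt ℝ g x ∧ DifferentiableAt ℝ (deriv g) x)
    (hg'' : ∀ x ∈ Set.Ioo a b, 0 ≤ deriv (deriv g) x)
    (n : ℕ) (p q : Fin n → ℝ)
    (hp : ∀ i, 0 < p i) (hq : ∀ i, 0 < q i)
    (hp1 : ∑ i, p i = 1) (hq1 : ∑ i, q i = 1)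
    (hratio_mem : ∀ i, p i / q i ∈ Set.Ioo a b) :
    0 ≤ ∑ i, q i * g (p i / q i) := by
  have hconv : ConvexOn ℝ (Set.Ioo a b) g := by
    apply convexOn_of_deriv2_nonneg' (convex_Ioo a b)
    · exact fun x hx => ((hd x hx).1).differentiableWithinAt
    · exact fun x hx => ((hd x hx).2).differentiableWithinAt
    · intro x hx
      simpa [Function.iterate_succ, Function.comp] using hg'' x hx
  have hjensen := hconv.map_sum_le (t := Finset.univ) (w := q) (p := fun i => p i / q i)
    (fun i _ => (hq i).le) hq1 (fun i _ => hratio_mem i)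
  have hsum : ∑ i, q i • (p i / q i) = (1 : ℝ) := by
    rw [← hp1]
    exact Finset.sum_congr rfl fun i _ => by
      rw [smul_eq_mul, mul_div_cancel₀ _ (hq i).ne']
  rw [hsum, hg1] at hjensen
  simpa using hjensen

/-- Bounds between two Csiszár f-divergences in terms of bounds on the ratio of
second derivatives of the generating functions. -/
theorem stmt_2 (a b : ℝ) (f₁ f₂ : ℝ → ℝ)
    (h1 : (1 : ℝ) ∈ Set.Ioo a b) (hf₁1 : f₁ 1 = 0) (hf₂1 : f₂ 1 = 0)
    (hd₁ : ∀ x ∈ Set.Ioo a b, DifferentiableAt ℝ f₁ x ∧ DifferentiableAt ℝ (deriv f₁) x)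
    (hd₂ : ∀ x ∈ Set.Ioo a b, DifferentiableAt ℝ f₂ x ∧ DifferentiableAt ℝ (deriv f₂) x)
    (m M : ℝ) (hm : 0 ≤ m) (hmM : m < M)
    (hpos : ∀ x ∈ Set.Ioo a b, 0 < deriv (deriv f₂) x)
    (hratio : ∀ x ∈ Set.Ioo a b,
      m ≤ deriv (deriv f₁) x / deriv (deriv f₂) x ∧
        deriv (deriv f₁) x / deriv (deriv f₂) x ≤ M)
    (n : ℕ) (hn : 2 ≤ n) (p q : Fin n → ℝ)
    (hp : ∀ i, 0 < p i) (hq : ∀ i, 0 < q i)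
    (hp1 : ∑ i, p i = 1) (hq1 : ∑ i, q i = 1)
    (hratio_mem : ∀ i, p i / q i ∈ Set.Ioo a b) :
    m * ∑ i, q i * f₂ (p i / q i) ≤ ∑ i, q i * f₁ (p i / q i) ∧
      ∑ i, q i * f₁ (p i / q i) ≤ M * ∑ i, q i * f₂ (p i / q i) := by
  constructor
  · -- apply key lemma to g = 1 * f₁ + (-m) * f₂
    have h := key_lemma a b (fun y => 1 * f₁ y + (-m) * f₂ y) h1
      (by simp [hf₁1, hf₂1])
      (fun x hx => ⟨(deriv2_comb a b 1 (-m) f₁ f₂ hd₁ hd₂ hx).1,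
        (deriv2_comb a b 1 (-m) f₁ f₂ hd₁ hd₂ hx).2.1⟩)
      (fun x hx => by
        rw [(deriv2_comb a b 1 (-m) f₁ f₂ hd₁ hd₂ hx).2.2]
        have h2 := hpos x hx
        have h3 := (hratio x hx).1
        rw [le_div_iff₀ h2] at h3
        nlinarith)
      n p q hp hq hp1 hq1 hratio_mem
    have : ∑ i, q i * (1 * f₁ (p i / q i) + (-m) * f₂ (p i / q i))
        = ∑ i, q i * f₁ (p i / q i) - m * ∑ i, q i * f₂ (p i / q i) := by
      rw [Finset.mul_sum]
      rw [← Finset.sum_sub_distrib]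
      exact Finset.sum_congr rfl fun i _ => by ring
    rw [this] at h
    linarith
  · have h := key_lemma a b (fun y => (-1) * f₁ y + M * f₂ y) h1
      (by simp [hf₁1, hf₂1])
      (fun x hx => ⟨(deriv2_comb a b (-1) M f₁ f₂ hd₁ hd₂ hx).1,
        (deriv2_comb a b (-1) M f₁ f₂ hd₁ hd₂ hx).2.1⟩)
      (fun x hx => by
        rw [(deriv2_comb a b (-1) M f₁ f₂ hd₁ hd₂ hx).2.2]
        have h2 := hpos x hx
        have h3 := (hratio x hx).2
        rw [div_le_iff₀ h2] at h3
        nlinarith)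
      n p q hp hq hp1 hq1 hratio_mem
    have : ∑ i, q i * ((-1) * f₁ (p i / q i) + M * f₂ (p i / q i))
        = M * ∑ i, q i * f₂ (p i / q i) - ∑ i, q i * f₁ (p i / q i) := by
      rw [Finset.mul_sum, ← Finset.sum_sub_distrib]
      exact Finset.sum_congr rfl fun i _ => by ring
    rw [this] at h
    linarith
end

section
/- Let s, t ∈ ℝ with s + t ≥ 1 and t ≥ −1. Then for all P, Q ∈ Γ_n with r ≤ p_i/q_i ≤ R for all i: (1/(4R^{t+1}))((R+1)/(2R))^{s−2} Φ_t(P||Q) ≤ Ω_s(P||Q) ≤ (1/(4r^{t+1}))((r+1)/(2r))^{s−2} Φ_t(P||Q). -/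
open Real Finset

/-- Relative information of type `s` (generalized Kullback-Leibler divergence). -/
noncomputable def Phi (n : ℕ) (s : ℝ) (p q : Fin n → ℝ) : ℝ :=
  if s = 0 then ∑ i, q i * Real.log (q i / p i)
  else if s = 1 then ∑ i, p i * Real.log (p i / q i)
  else (s * (s - 1))⁻¹ * ((∑ i, (p i) ^ s * (q i) ^ (1 - s)) - 1)

/-- Unified relative JS and AG divergence of type `s`. -/
noncomputable def Omega (n : ℕ) (s : ℝ) (p q : Fin n → ℝ) : ℝ :=
  if s = 0 then ∑ i, p i * Real.log (2 * p i / (p i + q i))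
  else if s = 1 then ∑ i, ((p i + q i) / 2) * Real.log ((p i + q i) / (2 * p i))
  else (s * (s - 1))⁻¹ * ((∑ i, p i * ((p i + q i) / (2 * p i)) ^ s) - 1)

/-- Relative J-divergence of type `s`. -/
noncomputable def zeta (n : ℕ) (s : ℝ) (p q : Fin n → ℝ) : ℝ :=
  if s = 1 then ∑ i, (p i - q i) * Real.log ((p i + q i) / (2 * q i))
  else (s - 1)⁻¹ * ∑ i, (p i - q i) * ((p i + q i) / (2 * q i)) ^ (s - 1)

noncomputable def ft (t : ℝ) (x : ℝ) : ℝ :=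
  if t = 0 then -Real.log x
  else if t = 1 then x * Real.log x
  else (t * (t - 1))⁻¹ * (x ^ t - 1)

noncomputable def ft' (t : ℝ) (x : ℝ) : ℝ :=
  if t = 0 then -x⁻¹
  else if t = 1 then Real.log x + 1
  else (t - 1)⁻¹ * x ^ (t - 1)

lemma ft_one (t : ℝ) : ft t 1 = 0 := by
  unfold ft
  split_ifs <;> simp

lemma ft_hasDeriv (t : ℝ) {x : ℝ} (hx : 0 < x) : HasDerivAt (ft t) (ft' t x) x := by
  unfold ft ft'
  split_ifs with h0 h1
  · exact (Real.hasDerivAt_log hx.ne').neg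
  · have := (hasDerivAt_id x).mul (Real.hasDerivAt_log hx.ne')
    exact this.congr_deriv (by rw [id_eq, mul_inv_cancel₀ hx.ne']; ring)
  · have hd : HasDerivAt (fun y : ℝ => y ^ t) (t * x ^ (t - 1)) x :=
      Real.hasDerivAt_rpow_const (Or.inl hx.ne')
    have := ((hd.sub_const 1).const_mul (t * (t - 1))⁻¹)
    refine this.congr_deriv (Eq.symm ?_)
    have h1' : t - 1 ≠ 0 := sub_ne_zero.mpr h1
    field_simp
  
lemma ft'_hasDeriv (t : ℝ) {x : ℝ} (hx : 0 < x) : HasDerivAt (ft' t) (x ^ (t - 2)) x := by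
  unfold ft'
  split_ifs with h0 h1
  · have := (hasDerivAt_inv hx.ne').neg
    have e : x ^ (t - 2) = (x ^ 2)⁻¹ := by
      rw [h0]
      rw [show (0:ℝ) - 2 = -2 by norm_num, Real.rpow_neg hx.le,
        show (2:ℝ) = ((2:ℕ):ℝ) by norm_num, Real.rpow_natCast]
    rw [e]
    exact this.congr_deriv (neg_neg _)
  · have := (Real.hasDerivAt_log hx.ne').add_const 1
    have e : x ^ (t - 2) = x⁻¹ := by
      rw [h1, show (1:ℝ) - 2 = -1 by norm_num, Real.rpow_neg hx.le, Real.rpow_one]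
    rw [e]
    exact this
  · have hd : HasDerivAt (fun y : ℝ => y ^ (t-1)) ((t-1) * x ^ (t - 1 - 1)) x :=
      Real.hasDerivAt_rpow_const (Or.inl hx.ne')
    have := hd.const_mul (t - 1)⁻¹
    refine this.congr_deriv (Eq.symm ?_)
    rw [show t - 1 - 1 = t - 2 by ring]
    have h1' : t - 1 ≠ 0 := sub_ne_zero.mpr h1
    field_simp

noncomputable def gs (s x : ℝ) : ℝ :=
  if s = 0 then x * Real.log (2 * x / (x + 1))
  else if s = 1 then ((x + 1) / 2) * Real.log ((x + 1) / (2 * x))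
  else (s * (s - 1))⁻¹ * (x ^ (1 - s) * ((x + 1) / 2) ^ s - 1)

noncomputable def gs' (s x : ℝ) : ℝ :=
  if s = 0 then Real.log 2 + Real.log x - Real.log (x + 1) + (x + 1)⁻¹
  else if s = 1 then (Real.log (x + 1) - Real.log 2 - Real.log x) / 2 + 2⁻¹ - (1 + x⁻¹) / 2
  else (s * (s - 1))⁻¹ *
    ((1 - s) * x ^ (-s) * ((x + 1) / 2) ^ s + s / 2 * x ^ (1 - s) * ((x + 1) / 2) ^ (s - 1))

noncomputable def gsdd (s x : ℝ) : ℝ := x ^ (-s - 1) * ((x + 1) / 2) ^ (s - 2) / 4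

lemma gs_one (s : ℝ) : gs s 1 = 0 := by
  unfold gs
  split_ifs <;> norm_num

lemma gs_hasDeriv (s : ℝ) {x : ℝ} (hx : 0 < x) : HasDerivAt (gs s) (gs' s x) x := by
  have hx1 : (0:ℝ) < x + 1 := by linarith
  unfold gs gs'
  split_ifs with h0 h1
  · -- s = 0
    have hlog : HasDerivAt (fun y : ℝ => Real.log 2 + Real.log y - Real.log (y + 1))
        (x⁻¹ - (x + 1)⁻¹) x := by
      have l1 : HasDerivAt (fun y : ℝ => Real.log (y + 1)) (1 / (x + 1)) x :=
        ((hasDerivAt_id x).add_const 1).log hx1.ne'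
      have := ((Real.hasDerivAt_log hx.ne').const_add (Real.log 2)).sub l1
      exact this.congr_deriv (by rw [one_div])
    have haux : HasDerivAt (fun y : ℝ => y * (Real.log 2 + Real.log y - Real.log (y + 1)))
        (Real.log 2 + Real.log x - Real.log (x + 1) + (x + 1)⁻¹) x := by
      have := (hasDerivAt_id x).mul hlog
      refine this.congr_deriv (Eq.symm ?_)
      rw [id_eq]
      field_simp
      ring
    apply haux.congr_of_eventuallyEq
    filter_upwards [IsOpen.mem_nhds isOpen_Ioi (Set.mem_Ioi.mpr hx)] with y hy
    have hy' : (0:ℝ) < y := hy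
    have hy1 : (0:ℝ) < y + 1 := by linarith
    rw [Real.log_div (by positivity) hy1.ne', Real.log_mul (by norm_num) hy'.ne']
  · -- s = 1
    have hlog : HasDerivAt (fun y : ℝ => Real.log (y + 1) - Real.log 2 - Real.log y)
        ((x + 1)⁻¹ - x⁻¹) x := by
      have l1 : HasDerivAt (fun y : ℝ => Real.log (y + 1)) (1 / (x + 1)) x :=
        ((hasDerivAt_id x).add_const 1).log hx1.ne'
      have := (l1.sub_const (Real.log 2)).sub (Real.hasDerivAt_log hx.ne')
      exact this.congr_deriv (by rw [one_div])
    have haux : HasDerivAt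
        (fun y : ℝ => ((y + 1) / 2) * (Real.log (y + 1) - Real.log 2 - Real.log y))
        ((Real.log (x + 1) - Real.log 2 - Real.log x) / 2 + 2⁻¹ - (1 + x⁻¹) / 2) x := by
      have := (((hasDerivAt_id x).add_const 1).div_const 2).mul hlog
      refine this.congr_deriv (Eq.symm ?_)
      rw [id_eq]
      field_simp
      ring
    apply haux.congr_of_eventuallyEq
    filter_upwards [IsOpen.mem_nhds isOpen_Ioi (Set.mem_Ioi.mpr hx)] with y hy
    have hy' : (0:ℝ) < y := hy
    have hy1 : (0:ℝ) < y + 1 := by linarith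
    rw [Real.log_div hy1.ne' (by positivity), Real.log_mul (by norm_num) hy'.ne']
    ring
  · -- generic s
    have hu : (0:ℝ) < (x + 1) / 2 := by linarith
    have d1 : HasDerivAt (fun y : ℝ => y ^ (1 - s)) ((1 - s) * x ^ (1 - s - 1)) x :=
      Real.hasDerivAt_rpow_const (Or.inl hx.ne')
    have du : HasDerivAt (fun y : ℝ => (y + 1) / 2) (1 / 2) x := by
      simpa using ((hasDerivAt_id x).add_const 1).div_const 2
    have d2 : HasDerivAt (fun y : ℝ => ((y + 1) / 2) ^ s)
        (1 / 2 * s * ((x + 1) / 2) ^ (s - 1)) x := du.rpow_const (Or.inl hu.ne')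
    have := ((d1.mul d2).sub_const 1).const_mul (s * (s - 1))⁻¹
    refine this.congr_deriv (Eq.symm ?_)
    rw [show (1:ℝ) - s - 1 = -s by ring]
    ring

lemma gs'_hasDeriv (s : ℝ) {x : ℝ} (hx : 0 < x) : HasDerivAt (gs' s) (gsdd s x) x := by
  have hx1 : (0:ℝ) < x + 1 := by linarith
  have h2n : ((2:ℕ):ℝ) = (2:ℝ) := by norm_num
  unfold gs' gsdd
  split_ifs with h0 h1
  · -- s = 0
    have l1 : HasDerivAt (fun y : ℝ => Real.log (y + 1)) (1 / (x + 1)) x :=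
      ((hasDerivAt_id x).add_const 1).log hx1.ne'
    have linv : HasDerivAt (fun y : ℝ => (y + 1)⁻¹) (-1 / (x + 1) ^ 2) x :=
      ((hasDerivAt_id x).add_const 1).inv hx1.ne'
    have := (((Real.hasDerivAt_log hx.ne').const_add (Real.log 2)).sub l1).add linv
    refine this.congr_deriv (Eq.symm ?_)
    rw [h0]
    rw [show -(0:ℝ) - 1 = -1 by norm_num, show (0:ℝ) - 2 = -2 by norm_num,
      Real.rpow_neg hx.le, Real.rpow_one,
      Real.rpow_neg (le_of_lt (by linarith : (0:ℝ) < (x+1)/2)),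
      show (2:ℝ) = ((2:ℕ):ℝ) by norm_num, Real.rpow_natCast]
    field_simp
    ring
  · -- s = 1
    have linv : HasDerivAt (fun y : ℝ => (1 + y⁻¹) / 2) (-(x ^ 2)⁻¹ / 2) x :=
      ((hasDerivAt_inv hx.ne').const_add 1).div_const 2
    have l1 : HasDerivAt (fun y : ℝ => Real.log (y + 1)) (1 / (x + 1)) x :=
      ((hasDerivAt_id x).add_const 1).log hx1.ne'
    have := ((((l1.sub_const (Real.log 2)).sub
      (Real.hasDerivAt_log hx.ne')).div_const 2).add_const 2⁻¹).sub linv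
    refine this.congr_deriv (Eq.symm ?_)
    rw [h1]
    rw [show -(1:ℝ) - 1 = -2 by norm_num, show (1:ℝ) - 2 = -1 by norm_num,
      Real.rpow_neg hx.le, Real.rpow_neg (le_of_lt (by linarith : (0:ℝ) < (x+1)/2)),
      Real.rpow_one, show (2:ℝ) = ((2:ℕ):ℝ) by norm_num, Real.rpow_natCast]
    field_simp
    ring
  · -- generic s
    have hu : (0:ℝ) < (x + 1) / 2 := by linarith
    have hs1 : s - 1 ≠ 0 := sub_ne_zero.mpr h1
    have du : HasDerivAt (fun y : ℝ => (y + 1) / 2) (1 / 2) x := by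
      simpa using ((hasDerivAt_id x).add_const 1).div_const 2
    have dxs : HasDerivAt (fun y : ℝ => y ^ (-s)) (-s * x ^ (-s - 1)) x :=
      Real.hasDerivAt_rpow_const (Or.inl hx.ne')
    have dx1s : HasDerivAt (fun y : ℝ => y ^ (1 - s)) ((1 - s) * x ^ (1 - s - 1)) x :=
      Real.hasDerivAt_rpow_const (Or.inl hx.ne')
    have dus : HasDerivAt (fun y : ℝ => ((y + 1) / 2) ^ s)
        (1 / 2 * s * ((x + 1) / 2) ^ (s - 1)) x := du.rpow_const (Or.inl hu.ne')
    have dus1 : HasDerivAt (fun y : ℝ => ((y + 1) / 2) ^ (s - 1))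
        (1 / 2 * (s - 1) * ((x + 1) / 2) ^ (s - 1 - 1)) x := du.rpow_const (Or.inl hu.ne')
    have hterm1 := (dxs.const_mul (1 - s)).mul dus
    have hterm2 := (dx1s.const_mul (s / 2)).mul dus1
    have := (hterm1.add hterm2).const_mul (s * (s - 1))⁻¹
    refine this.congr_deriv (Eq.symm ?_)
    rw [show (1:ℝ) - s - 1 = -s by ring, show s - 1 - 1 = s - 2 by ring]
    have h2u : ((x + 1) / 2) ^ (2:ℝ) = ((x + 1) / 2) * ((x + 1) / 2) := by
      rw [show (2:ℝ) = ((2:ℕ):ℝ) by norm_num, Real.rpow_natCast]; ring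
    have h2x : x ^ (2:ℝ) = x * x := by
      rw [show (2:ℝ) = ((2:ℕ):ℝ) by norm_num, Real.rpow_natCast]; ring
    have eu2 : ((x + 1) / 2) ^ s = ((x + 1) / 2) ^ (s - 2) * (((x + 1) / 2) * ((x + 1) / 2)) := by
      have h := Real.rpow_add hu (s - 2) 2
      rw [h2u] at h
      rw [← h]; congr 1; ring
    have eu1 : ((x + 1) / 2) ^ (s - 1) = ((x + 1) / 2) ^ (s - 2) * ((x + 1) / 2) := by
      have h := Real.rpow_add hu (s - 2) 1
      rw [Real.rpow_one] at h
      rw [← h]; congr 1; ring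
    have ex0 : x ^ (-s) = x ^ (-s - 1) * x := by
      have h := Real.rpow_add hx (-s - 1) 1
      rw [Real.rpow_one] at h
      rw [← h]; congr 1; ring
    have ex1 : x ^ (1 - s) = x ^ (-s - 1) * (x * x) := by
      have h := Real.rpow_add hx (-s - 1) 2
      rw [h2x] at h
      rw [← h]; congr 1; ring
    rw [eu2, eu1, ex0, ex1]
    field_simp
    ring

noncomputable def rho (s t x : ℝ) : ℝ := x ^ (1 - s - t) * ((x + 1) / 2) ^ (s - 2) / 4

lemma gsdd_eq_rho (s t : ℝ) {x : ℝ} (hx : 0 < x) :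
    gsdd s x = rho s t x * x ^ (t - 2) := by
  unfold gsdd rho
  have h := Real.rpow_add hx (1 - s - t) (t - 2)
  rw [show 1 - s - t + (t - 2) = -s - 1 by ring] at h
  rw [h]
  ring

lemma rho_hasDeriv (s t : ℝ) {x : ℝ} (hx : 0 < x) :
    HasDerivAt (rho s t)
      ((x ^ (1 - s - t - 1) * ((x + 1) / 2) ^ (s - 2 - 1)) *
        (-((t + 1) * x + (s + t - 1)) / 2) / 4) x := by
  have hx1 : (0:ℝ) < x + 1 := by linarith
  have hu : (0:ℝ) < (x + 1) / 2 := by linarith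
  have du : HasDerivAt (fun y : ℝ => (y + 1) / 2) (1 / 2) x := by
    simpa using ((hasDerivAt_id x).add_const 1).div_const 2
  have d1 : HasDerivAt (fun y : ℝ => y ^ (1 - s - t)) ((1 - s - t) * x ^ (1 - s - t - 1)) x :=
    Real.hasDerivAt_rpow_const (Or.inl hx.ne')
  have d2 : HasDerivAt (fun y : ℝ => ((y + 1) / 2) ^ (s - 2))
      (1 / 2 * (s - 2) * ((x + 1) / 2) ^ (s - 2 - 1)) x := du.rpow_const (Or.inl hu.ne')
  have := (d1.mul d2).div_const 4
  refine this.congr_deriv (Eq.symm ?_)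
  have ex : x ^ (1 - s - t) = x ^ (1 - s - t - 1) * x := by
    have h := Real.rpow_add hx (1 - s - t - 1) 1
    rw [Real.rpow_one] at h
    rw [← h]; congr 1; ring
  have eu : ((x + 1) / 2) ^ (s - 2) = ((x + 1) / 2) ^ (s - 2 - 1) * ((x + 1) / 2) := by
    have h := Real.rpow_add hu (s - 2 - 1) 1
    rw [Real.rpow_one] at h
    rw [← h]; congr 1; ring
  rw [ex, eu]
  ring

lemma rho_anti (s t : ℝ) (hst : 1 ≤ s + t) (ht : -1 ≤ t) :
    AntitoneOn (rho s t) (Set.Ioi (0:ℝ)) := by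
  have hderiv : ∀ x ∈ Set.Ioi (0:ℝ), HasDerivAt (rho s t)
      ((x ^ (1 - s - t - 1) * ((x + 1) / 2) ^ (s - 2 - 1)) *
        (-((t + 1) * x + (s + t - 1)) / 2) / 4) x := fun x hx => rho_hasDeriv s t hx
  apply antitoneOn_of_deriv_nonpos (convex_Ioi 0)
  · exact fun x hx => (hderiv x hx).continuousAt.continuousWithinAt
  · intro x hx
    rw [interior_Ioi] at hx
    exact (hderiv x hx).differentiableAt.differentiableWithinAt
  · intro x hx
    rw [interior_Ioi] at hx
    rw [(hderiv x hx).deriv]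
    have hx' : (0:ℝ) < x := hx
    have h1 : (0:ℝ) < x ^ (1 - s - t - 1) := Real.rpow_pos_of_pos hx' _
    have h2 : (0:ℝ) < ((x + 1) / 2) ^ (s - 2 - 1) := Real.rpow_pos_of_pos (by linarith) _
    have h3 : -((t + 1) * x + (s + t - 1)) / 2 ≤ 0 := by nlinarith
    have := mul_nonpos_of_nonneg_of_nonpos (le_of_lt (mul_pos h1 h2)) h3
    linarith

lemma tangent_le {G G' G'' : ℝ → ℝ} {a b : ℝ} (hab : a ≤ b)
    (h1a : a ≤ 1) (h1b : 1 ≤ b)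
    (hd : ∀ x ∈ Set.Icc a b, HasDerivAt G (G' x) x)
    (hd' : ∀ x ∈ Set.Icc a b, HasDerivAt G' (G'' x) x)
    (hpos : ∀ x ∈ Set.Icc a b, 0 ≤ G'' x) :
    ∀ x ∈ Set.Icc a b, G 1 + G' 1 * (x - 1) ≤ G x := by
  have h1m : (1:ℝ) ∈ Set.Icc a b := ⟨h1a, h1b⟩
  have hmono : MonotoneOn G' (Set.Icc a b) := by
    apply monotoneOn_of_deriv_nonneg (convex_Icc a b)
    · exact fun x hx => (hd' x hx).continuousAt.continuousWithinAt
    · intro x hx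
      rw [interior_Icc] at hx
      exact (hd' x (Set.Ioo_subset_Icc_self hx)).differentiableAt.differentiableWithinAt
    · intro x hx
      rw [interior_Icc] at hx
      rw [(hd' x (Set.Ioo_subset_Icc_self hx)).deriv]
      exact hpos x (Set.Ioo_subset_Icc_self hx)
  intro x hx
  rcases lt_trichotomy x 1 with hlt | heq | hgt
  · obtain ⟨c, hc, hceq⟩ := exists_hasDerivAt_eq_slope G G' hlt
      (fun y hy => (hd y ⟨le_trans hx.1 hy.1, le_trans hy.2 h1b⟩).continuousAt.continuousWithinAt)
      (fun y hy => hd y ⟨le_trans hx.1 (le_of_lt hy.1), le_trans (le_of_lt hy.2) h1b⟩)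
    have hcm : c ∈ Set.Icc a b := ⟨le_trans hx.1 hc.1.le, le_trans hc.2.le h1b⟩
    have hle : G' c ≤ G' 1 := hmono hcm h1m hc.2.le
    rw [hceq] at hle
    have h1x : (0:ℝ) < 1 - x := by linarith
    rw [div_le_iff₀ h1x] at hle
    nlinarith
  · simp [heq]
  · obtain ⟨c, hc, hceq⟩ := exists_hasDerivAt_eq_slope G G' hgt
      (fun y hy => (hd y ⟨le_trans h1a hy.1, le_trans hy.2 hx.2⟩).continuousAt.continuousWithinAt)
      (fun y hy => hd y ⟨le_trans h1a (le_of_lt hy.1), le_trans (le_of_lt hy.2) hx.2⟩)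
    have hcm : c ∈ Set.Icc a b := ⟨le_trans h1a hc.1.le, le_trans hc.2.le hx.2⟩
    have hle : G' 1 ≤ G' c := hmono h1m hcm hc.1.le
    rw [hceq] at hle
    have h1x : (0:ℝ) < x - 1 := by linarith
    rw [le_div_iff₀ h1x] at hle
    nlinarith


lemma Phi_eq (n : ℕ) (t : ℝ) (p q : Fin n → ℝ) (hp : ∀ i, 0 < p i) (hq : ∀ i, 0 < q i)
    (hq1 : ∑ i, q i = 1) :
    Phi n t p q = ∑ i, q i * ft t (p i / q i) := by
  have hqx : ∀ i : Fin n, q i * (p i / q i) = p i := fun i => by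
    rw [mul_div_assoc']
    exact mul_div_cancel_left₀ _ (hq i).ne'
  unfold Phi ft
  split_ifs with h0 h1
  · apply Finset.sum_congr rfl
    intro i _
    rw [show q i / p i = (p i / q i)⁻¹ by rw [inv_div], Real.log_inv]
  · apply Finset.sum_congr rfl
    intro i _
    rw [← mul_assoc, hqx i]
  · have key : ∀ i : Fin n, q i * ((t * (t - 1))⁻¹ * ((p i / q i) ^ t - 1)) =
        (t * (t - 1))⁻¹ * (p i ^ t * q i ^ (1 - t) - q i) := by
      intro i
      have hdiv : (p i / q i) ^ t = p i ^ t / q i ^ t :=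
        Real.div_rpow (hp i).le (hq i).le t
      have hq1t : q i ^ (1 - t) = q i / q i ^ t := by
        rw [Real.rpow_sub (hq i), Real.rpow_one]
      have hqt : (0:ℝ) < q i ^ t := Real.rpow_pos_of_pos (hq i) _
      rw [hdiv, hq1t]
      field_simp
    rw [Finset.sum_congr rfl (fun i _ => key i), ← Finset.mul_sum, Finset.sum_sub_distrib, hq1]

lemma Omega_eq (n : ℕ) (s : ℝ) (p q : Fin n → ℝ) (hp : ∀ i, 0 < p i) (hq : ∀ i, 0 < q i)
    (hq1 : ∑ i, q i = 1) :
    Omega n s p q = ∑ i, q i * gs s (p i / q i) := by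
  have hxpos : ∀ i : Fin n, (0:ℝ) < p i / q i := fun i => div_pos (hp i) (hq i)
  have hpq : ∀ i : Fin n, (0:ℝ) < p i + q i := fun i => by have := hp i; have := hq i; linarith
  have hqx : ∀ i : Fin n, q i * (p i / q i) = p i := fun i => by
    rw [mul_div_assoc']
    exact mul_div_cancel_left₀ _ (hq i).ne'
  have h2x : ∀ i : Fin n, 2 * (p i / q i) / (p i / q i + 1) = 2 * p i / (p i + q i) := by
    intro i
    have h1 : p i / q i + 1 ≠ 0 := ne_of_gt (by have := hxpos i; linarith)
    field_simp [(hp i).ne', (hq i).ne', (hpq i).ne']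
  have hx1 : ∀ i : Fin n, (p i / q i + 1) / (2 * (p i / q i)) = (p i + q i) / (2 * p i) := by
    intro i
    field_simp [(hp i).ne', (hq i).ne', (hpq i).ne']
  have hmid : ∀ i : Fin n, q i * ((p i / q i + 1) / 2) = (p i + q i) / 2 := by
    intro i
    field_simp [(hq i).ne']
  unfold Omega gs
  split_ifs with h0 h1
  · apply Finset.sum_congr rfl
    intro i _
    rw [h2x i, ← mul_assoc, hqx i]
  · apply Finset.sum_congr rfl
    intro i _
    rw [hx1 i, ← mul_assoc, hmid i]
  · have key : ∀ i : Fin n, q i * ((s * (s - 1))⁻¹ * ((p i / q i) ^ (1 - s) * ((p i / q i + 1) / 2) ^ s - 1)) =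
        (s * (s - 1))⁻¹ * (p i * ((p i + q i) / (2 * p i)) ^ s - q i) := by
      intro i
      have e1 : (p i / q i + 1) / 2 = (p i + q i) / (2 * q i) := by
        rw [div_eq_div_iff (by norm_num) (by have := hq i; positivity)]
        field_simp [(hq i).ne']
      have e2 : (p i / q i) ^ (1 - s) = (p i / q i) * (q i / p i) ^ s := by
        have h := Real.rpow_add (hxpos i) 1 (-s)
        rw [Real.rpow_one] at h
        rw [show (1:ℝ) - s = 1 + -s by ring, h, Real.rpow_neg (hxpos i).le,
          ← Real.inv_rpow (hxpos i).le, inv_div]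
      have e3 : (q i / p i) ^ s * ((p i + q i) / (2 * q i)) ^ s =
          ((p i + q i) / (2 * p i)) ^ s := by
        rw [← Real.mul_rpow (div_pos (hq i) (hp i)).le
          (div_pos (hpq i) (by have := hq i; linarith)).le]
        congr 1
        field_simp [(hp i).ne', (hq i).ne']
      rw [e1, e2]
      rw [show p i / q i * (q i / p i) ^ s * ((p i + q i) / (2 * q i)) ^ s =
        p i / q i * ((q i / p i) ^ s * ((p i + q i) / (2 * q i)) ^ s) by ring, e3]
      have hthis : q i * (p i / q i * ((p i + q i) / (2 * p i)) ^ s) =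
          p i * ((p i + q i) / (2 * p i)) ^ s := by rw [← mul_assoc, hqx i]
      rw [show q i * ((s * (s - 1))⁻¹ * (p i / q i * ((p i + q i) / (2 * p i)) ^ s - 1)) =
        (s * (s - 1))⁻¹ * (q i * (p i / q i * ((p i + q i) / (2 * p i)) ^ s) - q i) by ring,
        hthis]
    rw [Finset.sum_congr rfl (fun i _ => key i), ← Finset.mul_sum, Finset.sum_sub_distrib, hq1]

lemma sum_H_nonneg (n : ℕ) (p q : Fin n → ℝ) (hp : ∀ i, 0 < p i) (hq : ∀ i, 0 < q i)
    (hp1 : ∑ i, p i = 1) (hq1 : ∑ i, q i = 1)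
    (r R : ℝ) (hr1 : r ≤ 1) (h1R : 1 ≤ R) (hrR : r ≤ R)
    (hbound : ∀ i, p i / q i ∈ Set.Icc r R)
    (H H' H'' : ℝ → ℝ)
    (hd : ∀ x ∈ Set.Icc r R, HasDerivAt H (H' x) x)
    (hd' : ∀ x ∈ Set.Icc r R, HasDerivAt H' (H'' x) x)
    (hpos : ∀ x ∈ Set.Icc r R, 0 ≤ H'' x)
    (hH1 : H 1 = 0) :
    0 ≤ ∑ i, q i * H (p i / q i) := by
  have htan := tangent_le hrR hr1 h1R hd hd' hpos
  rw [hH1] at htan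
  have hsplit : ∑ i, q i * H (p i / q i) =
      (∑ i, q i * (H (p i / q i) - H' 1 * (p i / q i - 1))) + H' 1 * ∑ i, (p i - q i) := by
    rw [Finset.mul_sum, ← Finset.sum_add_distrib]
    apply Finset.sum_congr rfl
    intro i _
    have hq0 := (hq i).ne'
    have hpqi : q i * (p i / q i - 1) = p i - q i := by
      rw [mul_sub, mul_one, mul_div_assoc', mul_div_cancel_left₀ _ hq0]
    rw [← hpqi]
    ring
  rw [hsplit, Finset.sum_sub_distrib, hp1, hq1, sub_self, mul_zero, add_zero]
  apply Finset.sum_nonneg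
  intro i _
  apply mul_nonneg (hq i).le
  have := htan (p i / q i) (hbound i)
  linarith

theorem stmt_4 (s t : ℝ) (hst : 1 ≤ s + t) (ht : -1 ≤ t)
    (n : ℕ) (hn : 2 ≤ n) (p q : Fin n → ℝ)
    (hp : ∀ i, 0 < p i) (hq : ∀ i, 0 < q i)
    (hp1 : ∑ i, p i = 1) (hq1 : ∑ i, q i = 1)
    (r R : ℝ) (hr : 0 < r) (hrR : r ≤ R)
    (hbound : ∀ i, r ≤ p i / q i ∧ p i / q i ≤ R) :
    (1 / (4 * R ^ (t + 1))) * ((R + 1) / (2 * R)) ^ (s - 2) * Phi n t p q ≤ Omega n s p q ∧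
      Omega n s p q ≤ (1 / (4 * r ^ (t + 1))) * ((r + 1) / (2 * r)) ^ (s - 2) * Phi n t p q := by
  have hR : (0:ℝ) < R := lt_of_lt_of_le hr hrR
  have hxmem : ∀ i, p i / q i ∈ Set.Icc r R := fun i => ⟨(hbound i).1, (hbound i).2⟩
  have hr1 : r ≤ 1 := by
    calc r = ∑ i, r * q i := by rw [← Finset.mul_sum, hq1, mul_one]
    _ ≤ ∑ i, p i := Finset.sum_le_sum fun i _ => (le_div_iff₀ (hq i)).mp (hbound i).1
    _ = 1 := hp1
  have h1R : (1:ℝ) ≤ R := by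
    calc (1:ℝ) = ∑ i, p i := hp1.symm
    _ ≤ ∑ i, R * q i := Finset.sum_le_sum fun i _ => by
        have := (div_le_iff₀ (hq i)).mp (hbound i).2
        linarith [this]
    _ = R := by rw [← Finset.mul_sum, hq1, mul_one]
  have hmempos : ∀ x ∈ Set.Icc r R, (0:ℝ) < x := fun x hx => lt_of_lt_of_le hr hx.1
  -- the constants equal rho values
  have hconst : ∀ a : ℝ, 0 < a →
      (1 / (4 * a ^ (t + 1))) * ((a + 1) / (2 * a)) ^ (s - 2) = rho s t a := by
    intro a ha
    unfold rho
    have h1 : (a + 1) / (2 * a) = ((a + 1) / 2) / a := by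
      rw [div_div]
    rw [h1, Real.div_rpow (by linarith) ha.le]
    have e1 : a ^ (s - 2) * a ^ (t + 1) * a ^ (1 - s - t) = 1 := by
      rw [← Real.rpow_add ha, ← Real.rpow_add ha,
        show s - 2 + (t + 1) + (1 - s - t) = 0 by ring, Real.rpow_zero]
    have n1 : a ^ (s - 2) ≠ 0 := ne_of_gt (Real.rpow_pos_of_pos ha _)
    have n2 : a ^ (t + 1) ≠ 0 := ne_of_gt (Real.rpow_pos_of_pos ha _)
    field_simp
    linear_combination (-1 : ℝ) * e1
  -- generic bound machinery
  have main : ∀ c : ℝ, (∀ x ∈ Set.Icc r R, c * x ^ (t - 2) ≤ gsdd s x) →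
      c * Phi n t p q ≤ Omega n s p q := by
    intro c hc
    have hd : ∀ x ∈ Set.Icc r R,
        HasDerivAt (fun y => gs s y - c * ft t y) (gs' s x - c * ft' t x) x := fun x hx =>
      (gs_hasDeriv s (hmempos x hx)).sub ((ft_hasDeriv t (hmempos x hx)).const_mul c)
    have hd' : ∀ x ∈ Set.Icc r R,
        HasDerivAt (fun y => gs' s y - c * ft' t y) (gsdd s x - c * x ^ (t - 2)) x := fun x hx =>
      (gs'_hasDeriv s (hmempos x hx)).sub ((ft'_hasDeriv t (hmempos x hx)).const_mul c)
    have hpos' : ∀ x ∈ Set.Icc r R, 0 ≤ gsdd s x - c * x ^ (t - 2) := fun x hx => by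
      have := hc x hx
      linarith
    have hH1 : gs s 1 - c * ft t 1 = 0 := by rw [gs_one, ft_one]; ring
    have := sum_H_nonneg n p q hp hq hp1 hq1 r R hr1 h1R hrR hxmem
      (fun y => gs s y - c * ft t y) (fun y => gs' s y - c * ft' t y)
      (fun y => gsdd s y - c * y ^ (t - 2)) hd hd' hpos' hH1
    have heq : ∑ i, q i * (gs s (p i / q i) - c * ft t (p i / q i)) =
        Omega n s p q - c * Phi n t p q := by
      rw [Omega_eq n s p q hp hq hq1, Phi_eq n t p q hp hq hq1, Finset.mul_sum,
        ← Finset.sum_sub_distrib]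
      apply Finset.sum_congr rfl
      intro i _
      ring
    rw [heq] at this
    linarith
  have mainU : ∀ c : ℝ, (∀ x ∈ Set.Icc r R, gsdd s x ≤ c * x ^ (t - 2)) →
      Omega n s p q ≤ c * Phi n t p q := by
    intro c hc
    have hd : ∀ x ∈ Set.Icc r R,
        HasDerivAt (fun y => c * ft t y - gs s y) (c * ft' t x - gs' s x) x := fun x hx =>
      ((ft_hasDeriv t (hmempos x hx)).const_mul c).sub (gs_hasDeriv s (hmempos x hx))
    have hd' : ∀ x ∈ Set.Icc r R,
        HasDerivAt (fun y => c * ft' t y - gs' s y) (c * x ^ (t - 2) - gsdd s x) x := fun x hx =>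
      ((ft'_hasDeriv t (hmempos x hx)).const_mul c).sub (gs'_hasDeriv s (hmempos x hx))
    have hpos' : ∀ x ∈ Set.Icc r R, 0 ≤ c * x ^ (t - 2) - gsdd s x := fun x hx => by
      have := hc x hx
      linarith
    have hH1 : c * ft t 1 - gs s 1 = 0 := by rw [gs_one, ft_one]; ring
    have := sum_H_nonneg n p q hp hq hp1 hq1 r R hr1 h1R hrR hxmem
      (fun y => c * ft t y - gs s y) (fun y => c * ft' t y - gs' s y)
      (fun y => c * y ^ (t - 2) - gsdd s y) hd hd' hpos' hH1
    have heq : ∑ i, q i * (c * ft t (p i / q i) - gs s (p i / q i)) =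
        c * Phi n t p q - Omega n s p q := by
      rw [Omega_eq n s p q hp hq hq1, Phi_eq n t p q hp hq hq1, Finset.mul_sum,
        ← Finset.sum_sub_distrib]
      apply Finset.sum_congr rfl
      intro i _
      ring
    rw [heq] at this
    linarith
  have hanti := rho_anti s t hst ht
  constructor
  · rw [hconst R hR]
    apply main
    intro x hx
    have hx' := hmempos x hx
    rw [gsdd_eq_rho s t hx']
    apply mul_le_mul_of_nonneg_right _ (Real.rpow_nonneg hx'.le _)
    exact hanti (Set.mem_Ioi.mpr hx') (Set.mem_Ioi.mpr hR) hx.2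
  · rw [hconst r hr]
    apply mainU
    intro x hx
    have hx' := hmempos x hx
    rw [gsdd_eq_rho s t hx']
    apply mul_le_mul_of_nonneg_right _ (Real.rpow_nonneg hx'.le _)
    exact hanti (Set.mem_Ioi.mpr hr) (Set.mem_Ioi.mpr hx') hx.1
end

section
/- Let s, t ∈ ℝ with s ≥ t and t ≤ 2. Then for all P, Q ∈ Γ_n with r ≤ p_i/q_i ≤ R for all i: (1/(4r^{t−2}))((r+1)/2)^{s−2} Φ_t(P||Q) ≤ Ω_s(Q||P) ≤ (1/(4R^{t−2}))((R+1)/2)^{s−2} Φ_t(P||Q). -/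
open Real Finset

/-- pointwise generator for Phi -/
noncomputable def gg (t x : ℝ) : ℝ :=
  if t = 0 then x - 1 - Real.log x
  else if t = 1 then x * Real.log x - x + 1
  else (t * (t - 1))⁻¹ * (x ^ t - 1 - t * (x - 1))

noncomputable def gg' (t x : ℝ) : ℝ :=
  if t = 1 then Real.log x else (t - 1)⁻¹ * (x ^ (t - 1) - 1)

/-- pointwise generator for Omega (adjoint) -/
noncomputable def ff (s x : ℝ) : ℝ :=
  if s = 0 then (x - 1) / 2 - Real.log ((x + 1) / 2)
  else if s = 1 then ((x + 1) / 2) * Real.log ((x + 1) / 2) - (x - 1) / 2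
  else (s * (s - 1))⁻¹ * (((x + 1) / 2) ^ s - 1 - s * (x - 1) / 2)

noncomputable def ff' (s x : ℝ) : ℝ :=
  if s = 1 then Real.log ((x + 1) / 2) / 2
  else (2 * (s - 1))⁻¹ * (((x + 1) / 2) ^ (s - 1) - 1)

lemma gg_one (t : ℝ) : gg t 1 = 0 := by
  unfold gg; split_ifs <;> simp [Real.one_rpow]

lemma gg'_one (t : ℝ) : gg' t 1 = 0 := by
  unfold gg'; split_ifs <;> simp [Real.one_rpow]

lemma ff_one (s : ℝ) : ff s 1 = 0 := by
  unfold ff; norm_num [Real.one_rpow]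

lemma ff'_one (s : ℝ) : ff' s 1 = 0 := by
  unfold ff'; norm_num [Real.one_rpow]

lemma hasDerivAt_gg (t : ℝ) {x : ℝ} (hx : 0 < x) : HasDerivAt (gg t) (gg' t x) x := by
  rcases eq_or_ne t 0 with rfl | h0
  · have h : HasDerivAt (fun y => y - 1 - Real.log y) (1 - x⁻¹) x :=
      ((hasDerivAt_id x).sub_const 1).sub (Real.hasDerivAt_log hx.ne')
    have he : gg 0 = fun y => y - 1 - Real.log y := by funext y; simp [gg]
    rw [he]
    convert h using 1
    have : (0:ℝ) - 1 = -1 := by norm_num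
    simp only [gg', if_neg (by norm_num : (0:ℝ) ≠ 1), this, Real.rpow_neg_one]
    ring
  rcases eq_or_ne t 1 with rfl | h1
  · have h : HasDerivAt (fun y => y * Real.log y - y + 1) (Real.log x) x := by
      have := ((hasDerivAt_id x).mul (Real.hasDerivAt_log hx.ne')).sub (hasDerivAt_id x)
      simpa [mul_inv_cancel₀ hx.ne'] using this.add_const 1
    have he : gg 1 = fun y => y * Real.log y - y + 1 := by funext y; simp [gg]
    rw [he]
    simpa [gg'] using h
  · have h : HasDerivAt (fun y : ℝ => (t * (t - 1))⁻¹ * (y ^ t - 1 - t * (y - 1)))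
        ((t * (t - 1))⁻¹ * (t * x ^ (t - 1) - t)) x := by
      have h1 : HasDerivAt (fun y : ℝ => y ^ t) (t * x ^ (t - 1)) x :=
        Real.hasDerivAt_rpow_const (Or.inl hx.ne')
      have h2 : HasDerivAt (fun y : ℝ => y ^ t - 1 - t * (y - 1)) (t * x ^ (t - 1) - t) x := by
        exact ((h1.sub_const 1).sub (((hasDerivAt_id x).sub_const 1).const_mul t)).congr_deriv (by ring)
      exact h2.const_mul _
    have he : gg t = fun y : ℝ => (t * (t - 1))⁻¹ * (y ^ t - 1 - t * (y - 1)) := by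
      funext y; simp [gg, h0, h1]
    rw [he]
    convert h using 1
    simp only [gg', if_neg h1]
    have ht1 : t - 1 ≠ 0 := sub_ne_zero.mpr h1
    field_simp

lemma hasDerivAt_gg' (t : ℝ) {x : ℝ} (hx : 0 < x) : HasDerivAt (gg' t) (x ^ (t - 2)) x := by
  rcases eq_or_ne t 1 with rfl | h1
  · have he : gg' 1 = Real.log := by funext y; simp [gg']
    rw [he]
    have : (1:ℝ) - 2 = -1 := by norm_num
    rw [this, Real.rpow_neg_one]
    exact Real.hasDerivAt_log hx.ne'
  · have he : gg' t = fun y : ℝ => (t - 1)⁻¹ * (y ^ (t - 1) - 1) := by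
      funext y; simp [gg', h1]
    rw [he]
    have h1' : HasDerivAt (fun y : ℝ => y ^ (t - 1)) ((t - 1) * x ^ (t - 1 - 1)) x :=
      Real.hasDerivAt_rpow_const (Or.inl hx.ne')
    have := (h1'.sub_const 1).const_mul (t - 1)⁻¹
    have ht1 : t - 1 ≠ 0 := sub_ne_zero.mpr h1
    have hexp : t - 1 - 1 = t - 2 := by ring
    rw [hexp] at this
    refine this.congr_deriv ?_
    field_simp

lemma hasDerivAt_half (x : ℝ) : HasDerivAt (fun y : ℝ => (y + 1) / 2) (1 / 2) x := by
  simpa using ((hasDerivAt_id x).add_const 1).div_const 2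

lemma hasDerivAt_halfpow (s : ℝ) {x : ℝ} (hx : 0 < x) :
    HasDerivAt (fun y : ℝ => ((y + 1) / 2) ^ s) (s * ((x + 1) / 2) ^ (s - 1) / 2) x := by
  have hu : (0:ℝ) < (x + 1) / 2 := by linarith
  have h := (Real.hasDerivAt_rpow_const (p := s) (Or.inl hu.ne')).comp x (hasDerivAt_half x)
  refine h.congr_deriv ?_; ring

lemma hasDerivAt_halflog {x : ℝ} (hx : 0 < x) :
    HasDerivAt (fun y : ℝ => Real.log ((y + 1) / 2)) (((x + 1) / 2)⁻¹ / 2) x := by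
  have hu : (0:ℝ) < (x + 1) / 2 := by linarith
  have h := (Real.hasDerivAt_log hu.ne').comp x (hasDerivAt_half x)
  refine h.congr_deriv ?_; ring

lemma hasDerivAt_ff (s : ℝ) {x : ℝ} (hx : 0 < x) : HasDerivAt (ff s) (ff' s x) x := by
  have hu : (0:ℝ) < (x + 1) / 2 := by linarith
  rcases eq_or_ne s 0 with rfl | h0
  · have he : ff 0 = fun y : ℝ => (y - 1) / 2 - Real.log ((y + 1) / 2) := by
      funext y; simp [ff]
    rw [he]
    have h := (((hasDerivAt_id x).sub_const 1).div_const 2).sub (hasDerivAt_halflog hx)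
    refine h.congr_deriv ?_
    have : (0:ℝ) - 1 = -1 := by norm_num
    simp only [ff', if_neg (by norm_num : (0:ℝ) ≠ 1), this, Real.rpow_neg_one]
    ring
  rcases eq_or_ne s 1 with rfl | h1
  · have he : ff 1 = fun y : ℝ => ((y + 1) / 2) * Real.log ((y + 1) / 2) - (y - 1) / 2 := by
      funext y; simp [ff]
    rw [he]
    have h := ((hasDerivAt_half x).mul (hasDerivAt_halflog hx)).sub
      (((hasDerivAt_id x).sub_const 1).div_const 2)
    refine h.congr_deriv ?_
    simp only [ff', if_pos rfl, ↓reduceIte]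
    field_simp
    ring
  · have he : ff s = fun y : ℝ => (s * (s - 1))⁻¹ * (((y + 1) / 2) ^ s - 1 - s * (y - 1) / 2) := by
      funext y; simp [ff, h0, h1]
    rw [he]
    have h2 : HasDerivAt (fun y : ℝ => ((y + 1) / 2) ^ s - 1 - s * (y - 1) / 2)
        (s * ((x + 1) / 2) ^ (s - 1) / 2 - s / 2) x := by
      have := ((hasDerivAt_halfpow s hx).sub_const 1).sub
        ((((hasDerivAt_id x).sub_const 1).const_mul s).div_const 2)
      refine this.congr_deriv ?_; ring
    have h := h2.const_mul (s * (s - 1))⁻¹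
    refine h.congr_deriv ?_
    simp only [ff', if_neg h1]
    have hs1 : s - 1 ≠ 0 := sub_ne_zero.mpr h1
    field_simp

lemma hasDerivAt_ff' (s : ℝ) {x : ℝ} (hx : 0 < x) :
    HasDerivAt (ff' s) ((1 / 4) * ((x + 1) / 2) ^ (s - 2)) x := by
  have hu : (0:ℝ) < (x + 1) / 2 := by linarith
  rcases eq_or_ne s 1 with rfl | h1
  · have he : ff' 1 = fun y : ℝ => Real.log ((y + 1) / 2) / 2 := by
      funext y; simp [ff']
    rw [he]
    have h := (hasDerivAt_halflog hx).div_const 2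
    refine h.congr_deriv ?_
    have : (1:ℝ) - 2 = -1 := by norm_num
    rw [this, Real.rpow_neg_one]
    ring
  · have he : ff' s = fun y : ℝ => (2 * (s - 1))⁻¹ * (((y + 1) / 2) ^ (s - 1) - 1) := by
      funext y; simp [ff', h1]
    rw [he]
    have h := ((hasDerivAt_halfpow (s - 1) hx).sub_const 1).const_mul (2 * (s - 1))⁻¹
    have hexp : s - 1 - 1 = s - 2 := by ring
    rw [hexp] at h
    refine h.congr_deriv ?_
    have hs1 : s - 1 ≠ 0 := sub_ne_zero.mpr h1
    field_simp
    ring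

lemma nonneg_aux {a b : ℝ} (ha1 : a ≤ 1) (h1b : 1 ≤ b)
    {F F' F'' : ℝ → ℝ}
    (hF : ∀ x ∈ Set.Icc a b, HasDerivAt F (F' x) x)
    (hF' : ∀ x ∈ Set.Icc a b, HasDerivAt F' (F'' x) x)
    (hF'' : ∀ x ∈ Set.Icc a b, 0 ≤ F'' x)
    (hF'1 : F' 1 = 0) (hF1 : F 1 = 0) :
    ∀ x ∈ Set.Icc a b, 0 ≤ F x := by
  have h1 : (1:ℝ) ∈ Set.Icc a b := ⟨ha1, h1b⟩
  have hmono : MonotoneOn F' (Set.Icc a b) := by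
    apply monotoneOn_of_deriv_nonneg (convex_Icc a b)
    · exact fun x hx => (hF' x hx).continuousAt.continuousWithinAt
    · intro x hx
      rw [interior_Icc] at hx
      exact (hF' x (Set.Ioo_subset_Icc_self hx)).differentiableAt.differentiableWithinAt
    · intro x hx
      rw [interior_Icc] at hx
      rw [(hF' x (Set.Ioo_subset_Icc_self hx)).deriv]
      exact hF'' x (Set.Ioo_subset_Icc_self hx)
  have hsub1 : Set.Icc a 1 ⊆ Set.Icc a b := Set.Icc_subset_Icc le_rfl h1b
  have hsub2 : Set.Icc 1 b ⊆ Set.Icc a b := Set.Icc_subset_Icc ha1 le_rfl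
  have hanti : AntitoneOn F (Set.Icc a 1) := by
    apply antitoneOn_of_deriv_nonpos (convex_Icc a 1)
    · exact fun x hx => (hF x (hsub1 hx)).continuousAt.continuousWithinAt
    · intro x hx
      rw [interior_Icc] at hx
      exact (hF x (hsub1 (Set.Ioo_subset_Icc_self hx))).differentiableAt.differentiableWithinAt
    · intro x hx
      rw [interior_Icc] at hx
      rw [(hF x (hsub1 (Set.Ioo_subset_Icc_self hx))).deriv]
      have hm : x ∈ Set.Icc a b := hsub1 (Set.Ioo_subset_Icc_self hx)
      calc F' x ≤ F' 1 := hmono hm h1 hx.2.le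
        _ = 0 := hF'1
  have hmon2 : MonotoneOn F (Set.Icc 1 b) := by
    apply monotoneOn_of_deriv_nonneg (convex_Icc 1 b)
    · exact fun x hx => (hF x (hsub2 hx)).continuousAt.continuousWithinAt
    · intro x hx
      rw [interior_Icc] at hx
      exact (hF x (hsub2 (Set.Ioo_subset_Icc_self hx))).differentiableAt.differentiableWithinAt
    · intro x hx
      rw [interior_Icc] at hx
      rw [(hF x (hsub2 (Set.Ioo_subset_Icc_self hx))).deriv]
      have hm : x ∈ Set.Icc a b := hsub2 (Set.Ioo_subset_Icc_self hx)
      calc (0:ℝ) = F' 1 := hF'1.symm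
        _ ≤ F' x := hmono h1 hm hx.1.le
  intro x hx
  rcases le_total x 1 with hx1 | hx1
  · have h := hanti ⟨hx.1, hx1⟩ ⟨ha1, le_rfl⟩ hx1
    rwa [hF1] at h
  · have h := hmon2 ⟨le_rfl, h1b⟩ ⟨hx1, hx.2⟩ hx1
    rwa [hF1] at h


/-- key exponent inequality: for 0 < a ≤ b, t ≤ s, t ≤ 2. -/
lemma key_exp {s t a b : ℝ} (hst : t ≤ s) (ht : t ≤ 2) (ha : 0 < a) (hab : a ≤ b) :
    ((a + 1) / 2) ^ (s - 2) * b ^ (t - 2) ≤ a ^ (t - 2) * ((b + 1) / 2) ^ (s - 2) := by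
  have hb : (0:ℝ) < b := lt_of_lt_of_le ha hab
  have hA : (0:ℝ) < (a + 1) / (b + 1) := by positivity
  have hB : (0:ℝ) < a / b := by positivity
  have hA1 : (a + 1) / (b + 1) ≤ 1 := by
    rw [div_le_one (by linarith)]; linarith
  have hB1 : a / b ≤ 1 := by rw [div_le_one hb]; exact hab
  have hBA : a / b ≤ (a + 1) / (b + 1) := by
    rw [div_le_div_iff₀ hb (by linarith)]; nlinarith
  have claim : ((a + 1) / (b + 1)) ^ (s - 2) ≤ (a / b) ^ (t - 2) := by
    rcases le_total s 2 with hs2 | hs2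
    · calc ((a + 1) / (b + 1)) ^ (s - 2) ≤ (a / b) ^ (s - 2) :=
            Real.rpow_le_rpow_of_nonpos hB hBA (by linarith)
        _ ≤ (a / b) ^ (t - 2) := Real.rpow_le_rpow_of_exponent_ge hB hB1 (by linarith)
    · calc ((a + 1) / (b + 1)) ^ (s - 2) ≤ 1 :=
            Real.rpow_le_one hA.le hA1 (by linarith)
        _ ≤ (a / b) ^ (t - 2) :=
            Real.one_le_rpow_of_pos_of_le_one_of_nonpos hB hB1 (by linarith)
  have e1 : ((a + 1) / 2) ^ (s - 2) = ((a + 1) / (b + 1)) ^ (s - 2) * ((b + 1) / 2) ^ (s - 2) := by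
    rw [← Real.mul_rpow hA.le (by positivity)]
    congr 1
    field_simp
  have e2 : a ^ (t - 2) = (a / b) ^ (t - 2) * b ^ (t - 2) := by
    rw [← Real.mul_rpow hB.le hb.le]
    congr 1
    field_simp
  rw [e1, e2]
  have hb2 : (0:ℝ) ≤ b ^ (t - 2) := (Real.rpow_pos_of_pos hb _).le
  have hb3 : (0:ℝ) ≤ ((b + 1) / 2) ^ (s - 2) := (Real.rpow_pos_of_pos (by linarith) _).le
  calc ((a + 1) / (b + 1)) ^ (s - 2) * ((b + 1) / 2) ^ (s - 2) * b ^ (t - 2)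
      ≤ (a / b) ^ (t - 2) * ((b + 1) / 2) ^ (s - 2) * b ^ (t - 2) := by
        apply mul_le_mul_of_nonneg_right (mul_le_mul_of_nonneg_right claim hb3) hb2
    _ = (a / b) ^ (t - 2) * b ^ (t - 2) * ((b + 1) / 2) ^ (s - 2) := by ring

lemma pointwise_lower {s t r R : ℝ} (hst : t ≤ s) (ht : t ≤ 2) (hr : 0 < r)
    (hr1 : r ≤ 1) (h1R : 1 ≤ R) :
    ∀ x ∈ Set.Icc r R,
      (1 / (4 * r ^ (t - 2))) * ((r + 1) / 2) ^ (s - 2) * gg t x ≤ ff s x := by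
  set m : ℝ := (1 / (4 * r ^ (t - 2))) * ((r + 1) / 2) ^ (s - 2) with hm
  have main : ∀ x ∈ Set.Icc r R, 0 ≤ ff s x - m * gg t x := by
    apply nonneg_aux hr1 h1R (F' := fun x => ff' s x - m * gg' t x)
      (F'' := fun x => (1 / 4) * ((x + 1) / 2) ^ (s - 2) - m * x ^ (t - 2))
    · intro x hx
      have hx0 : 0 < x := lt_of_lt_of_le hr hx.1
      exact (hasDerivAt_ff s hx0).sub ((hasDerivAt_gg t hx0).const_mul m)
    · intro x hx
      have hx0 : 0 < x := lt_of_lt_of_le hr hx.1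
      exact (hasDerivAt_ff' s hx0).sub ((hasDerivAt_gg' t hx0).const_mul m)
    · intro x hx
      have hx0 : 0 < x := lt_of_lt_of_le hr hx.1
      have hk := key_exp hst ht hr hx.1
      have hrp : (0:ℝ) < r ^ (t - 2) := Real.rpow_pos_of_pos hr _
      rw [sub_nonneg]
      calc m * x ^ (t - 2)
          = (((r + 1) / 2) ^ (s - 2) * x ^ (t - 2)) / (4 * r ^ (t - 2)) := by
            rw [hm]; ring
        _ ≤ (r ^ (t - 2) * ((x + 1) / 2) ^ (s - 2)) / (4 * r ^ (t - 2)) := by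
            gcongr
        _ = (1 / 4) * ((x + 1) / 2) ^ (s - 2) := by
            field_simp
    · simp [ff'_one, gg'_one]
    · simp [ff_one, gg_one]
  intro x hx
  have := main x hx
  linarith

lemma pointwise_upper {s t r R : ℝ} (hst : t ≤ s) (ht : t ≤ 2) (hr : 0 < r)
    (hr1 : r ≤ 1) (h1R : 1 ≤ R) :
    ∀ x ∈ Set.Icc r R,
      ff s x ≤ (1 / (4 * R ^ (t - 2))) * ((R + 1) / 2) ^ (s - 2) * gg t x := by
  set M : ℝ := (1 / (4 * R ^ (t - 2))) * ((R + 1) / 2) ^ (s - 2) with hM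
  have hR0 : (0:ℝ) < R := by linarith
  have main : ∀ x ∈ Set.Icc r R, 0 ≤ M * gg t x - ff s x := by
    apply nonneg_aux hr1 h1R (F' := fun x => M * gg' t x - ff' s x)
      (F'' := fun x => M * x ^ (t - 2) - (1 / 4) * ((x + 1) / 2) ^ (s - 2))
    · intro x hx
      have hx0 : 0 < x := lt_of_lt_of_le hr hx.1
      exact ((hasDerivAt_gg t hx0).const_mul M).sub (hasDerivAt_ff s hx0)
    · intro x hx
      have hx0 : 0 < x := lt_of_lt_of_le hr hx.1
      exact ((hasDerivAt_gg' t hx0).const_mul M).sub (hasDerivAt_ff' s hx0)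
    · intro x hx
      have hx0 : 0 < x := lt_of_lt_of_le hr hx.1
      have hk := key_exp hst ht hx0 hx.2
      have hrp : (0:ℝ) < R ^ (t - 2) := Real.rpow_pos_of_pos hR0 _
      rw [sub_nonneg]
      calc (1 / 4) * ((x + 1) / 2) ^ (s - 2)
          = (((x + 1) / 2) ^ (s - 2) * R ^ (t - 2)) / (4 * R ^ (t - 2)) := by
            rw [eq_div_iff (by positivity)]; ring
        _ ≤ (x ^ (t - 2) * ((R + 1) / 2) ^ (s - 2)) / (4 * R ^ (t - 2)) := by
            gcongr
        _ = M * x ^ (t - 2) := by rw [hM]; ring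
    · simp [ff'_one, gg'_one]
    · simp [ff_one, gg_one]
  intro x hx
  have := main x hx
  linarith

lemma phi_eq (n : ℕ) (t : ℝ) (p q : Fin n → ℝ) (hp : ∀ i, 0 < p i) (hq : ∀ i, 0 < q i)
    (hp1 : ∑ i, p i = 1) (hq1 : ∑ i, q i = 1) :
    Phi n t p q = ∑ i, q i * gg t (p i / q i) := by
  rcases eq_or_ne t 0 with rfl | h0
  · have e : ∀ i, q i * gg 0 (p i / q i) = (p i - q i) + q i * Real.log (q i / p i) := by
      intro i
      have hq0 := (hq i).ne'
      have hp0 := (hp i).ne'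
      simp only [gg, if_pos rfl, ↓reduceIte]
      rw [Real.log_div hp0 hq0, Real.log_div hq0 hp0]
      field_simp
      ring
    rw [Finset.sum_congr rfl (fun i _ => e i), Finset.sum_add_distrib,
      Finset.sum_sub_distrib, hp1, hq1]
    simp [Phi]
  rcases eq_or_ne t 1 with rfl | h1
  · have e : ∀ i, q i * gg 1 (p i / q i) = p i * Real.log (p i / q i) - p i + q i := by
      intro i
      have hq0 := (hq i).ne'
      simp only [gg, if_neg one_ne_zero, if_pos rfl, ↓reduceIte]
      field_simp
    rw [Finset.sum_congr rfl (fun i _ => e i)]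
    simp only [Finset.sum_add_distrib, Finset.sum_sub_distrib, hp1, hq1]
    simp [Phi]
  · have e : ∀ i, q i * gg t (p i / q i)
        = (t * (t - 1))⁻¹ * (p i ^ t * q i ^ (1 - t) - q i - t * (p i - q i)) := by
      intro i
      have h1' : t - 1 ≠ 0 := sub_ne_zero.mpr h1
      have hqt := (Real.rpow_pos_of_pos (hq i) t).ne'
      have hq0 := (hq i).ne'
      simp only [gg, if_neg h0, if_neg h1]
      rw [Real.div_rpow (hp i).le (hq i).le, Real.rpow_sub (hq i), Real.rpow_one]
      field_simp
    rw [Finset.sum_congr rfl (fun i _ => e i), ← Finset.mul_sum]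
    simp only [Phi, if_neg h0, if_neg h1]
    congr 1
    rw [Finset.sum_sub_distrib, Finset.sum_sub_distrib, ← Finset.mul_sum,
      Finset.sum_sub_distrib, hp1, hq1]
    ring

lemma omega_eq (n : ℕ) (s : ℝ) (p q : Fin n → ℝ) (hp : ∀ i, 0 < p i) (hq : ∀ i, 0 < q i)
    (hp1 : ∑ i, p i = 1) (hq1 : ∑ i, q i = 1) :
    Omega n s q p = ∑ i, q i * ff s (p i / q i) := by
  rcases eq_or_ne s 0 with rfl | h0
  · have e : ∀ i, q i * ff 0 (p i / q i)
        = (p i - q i) / 2 + q i * Real.log (2 * q i / (q i + p i)) := by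
      intro i
      have hq0 := (hq i).ne'
      have hp0 := (hp i).ne'
      simp only [ff, if_pos rfl, ↓reduceIte]
      have hx : (p i / q i + 1) / 2 = (2 * q i / (q i + p i))⁻¹ := by
        rw [inv_div]
        field_simp
        ring
      rw [hx, Real.log_inv]
      field_simp
      ring
    rw [Finset.sum_congr rfl (fun i _ => e i), Finset.sum_add_distrib,
      ← Finset.sum_div, Finset.sum_sub_distrib, hp1, hq1]
    simp [Omega]
  rcases eq_or_ne s 1 with rfl | h1
  · have e : ∀ i, q i * ff 1 (p i / q i)
        = ((q i + p i) / 2) * Real.log ((q i + p i) / (2 * q i)) - (p i - q i) / 2 := by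
      intro i
      have hq0 := (hq i).ne'
      simp only [ff, if_neg one_ne_zero, if_pos rfl, ↓reduceIte]
      have hx : (p i / q i + 1) / 2 = (q i + p i) / (2 * q i) := by
        field_simp
        ring
      rw [hx]
      field_simp
    rw [Finset.sum_congr rfl (fun i _ => e i), Finset.sum_sub_distrib,
      ← Finset.sum_div, Finset.sum_sub_distrib, hp1, hq1]
    simp [Omega]
  · have e : ∀ i, q i * ff s (p i / q i)
        = (s * (s - 1))⁻¹ * (q i * ((q i + p i) / (2 * q i)) ^ s - q i - s * (p i - q i) / 2) := by
      intro i
      have h1' : s - 1 ≠ 0 := sub_ne_zero.mpr h1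
      have hq0 := (hq i).ne'
      simp only [ff, if_neg h0, if_neg h1]
      have hx : (p i / q i + 1) / 2 = (q i + p i) / (2 * q i) := by
        field_simp
        ring
      rw [hx]
      field_simp
    rw [Finset.sum_congr rfl (fun i _ => e i), ← Finset.mul_sum]
    simp only [Omega, if_neg h0, if_neg h1]
    congr 1
    rw [Finset.sum_sub_distrib, Finset.sum_sub_distrib, ← Finset.sum_div,
      ← Finset.mul_sum, Finset.sum_sub_distrib, hp1, hq1]
    ring

theorem stmt_5 (s t : ℝ) (hst : t ≤ s) (ht : t ≤ 2)
    (n : ℕ) (hn : 2 ≤ n) (p q : Fin n → ℝ)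
    (hp : ∀ i, 0 < p i) (hq : ∀ i, 0 < q i)
    (hp1 : ∑ i, p i = 1) (hq1 : ∑ i, q i = 1)
    (r R : ℝ) (hr : 0 < r) (hrR : r ≤ R)
    (hbound : ∀ i, r ≤ p i / q i ∧ p i / q i ≤ R) :
    (1 / (4 * r ^ (t - 2))) * ((r + 1) / 2) ^ (s - 2) * Phi n t p q ≤ Omega n s q p ∧
      Omega n s q p ≤ (1 / (4 * R ^ (t - 2))) * ((R + 1) / 2) ^ (s - 2) * Phi n t p q := by
  have hr1 : r ≤ 1 := by
    have h : ∀ i, r * q i ≤ p i := by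
      intro i
      have := (hbound i).1
      rw [le_div_iff₀ (hq i)] at this
      exact this
    calc r = ∑ i, r * q i := by rw [← Finset.mul_sum, hq1, mul_one]
      _ ≤ ∑ i, p i := Finset.sum_le_sum fun i _ => h i
      _ = 1 := hp1
  have h1R : 1 ≤ R := by
    have h : ∀ i, p i ≤ R * q i := by
      intro i
      have := (hbound i).2
      rw [div_le_iff₀ (hq i)] at this
      exact this
    calc (1:ℝ) = ∑ i, p i := hp1.symm
      _ ≤ ∑ i, R * q i := Finset.sum_le_sum fun i _ => h i
      _ = R := by rw [← Finset.mul_sum, hq1, mul_one]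
  have hmem : ∀ i, p i / q i ∈ Set.Icc r R := fun i => ⟨(hbound i).1, (hbound i).2⟩
  rw [phi_eq n t p q hp hq hp1 hq1, omega_eq n s p q hp hq hp1 hq1]
  constructor
  · calc (1 / (4 * r ^ (t - 2))) * ((r + 1) / 2) ^ (s - 2) * ∑ i, q i * gg t (p i / q i)
        = ∑ i, q i * ((1 / (4 * r ^ (t - 2))) * ((r + 1) / 2) ^ (s - 2) * gg t (p i / q i)) := by
          rw [Finset.mul_sum]
          exact Finset.sum_congr rfl fun i _ => by ring
      _ ≤ ∑ i, q i * ff s (p i / q i) :=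
          Finset.sum_le_sum fun i _ => mul_le_mul_of_nonneg_left
            (pointwise_lower hst ht hr hr1 h1R _ (hmem i)) (hq i).le
  · calc ∑ i, q i * ff s (p i / q i)
        ≤ ∑ i, q i * ((1 / (4 * R ^ (t - 2))) * ((R + 1) / 2) ^ (s - 2) * gg t (p i / q i)) :=
          Finset.sum_le_sum fun i _ => mul_le_mul_of_nonneg_left
            (pointwise_upper hst ht hr hr1 h1R _ (hmem i)) (hq i).le
      _ = (1 / (4 * R ^ (t - 2))) * ((R + 1) / 2) ^ (s - 2) * ∑ i, q i * gg t (p i / q i) := by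
          rw [Finset.mul_sum]
          exact (Finset.sum_congr rfl fun i _ => by ring).symm
end

section
/- Let s, t ∈ ℝ with s ≤ t and t ≥ 2. Then for all P, Q ∈ Γ_n with r ≤ p_i/q_i ≤ R for all i: (1/(4R^{t−2}))((R+1)/2)^{s−2} Φ_t(P||Q) ≤ Ω_s(Q||P) ≤ (1/(4r^{t−2}))((r+1)/2)^{s−2} Φ_t(P||Q). -/
open Real Finset

/-- MVT-based: if `f'` is the derivative of `f` on `[a,b]` and `f'` is monotone-ish
(nonneg to the right of 1, nonpos to the left), then... we do two steps. -/
lemma mono_on_of_deriv (a b : ℝ) (f f' : ℝ → ℝ)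
    (hd : ∀ x ∈ Set.Icc a b, HasDerivAt f (f' x) x)
    (h0 : ∀ x ∈ Set.Icc a b, 0 ≤ f' x) :
    ∀ u ∈ Set.Icc a b, ∀ v ∈ Set.Icc a b, u ≤ v → f u ≤ f v := by
  intro u hu v hv huv
  rcases eq_or_lt_of_le huv with h | h
  · exact le_of_eq (by rw [h])
  have hsub : Set.Icc u v ⊆ Set.Icc a b := Set.Icc_subset_Icc hu.1 hv.2
  have hcont : ContinuousOn f (Set.Icc u v) := fun x hx =>
    ((hd x (hsub hx)).continuousAt).continuousWithinAt
  obtain ⟨c, hc, hceq⟩ := exists_hasDerivAt_eq_slope f f' h hcont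
    (fun x hx => hd x (hsub (Set.Ioo_subset_Icc_self hx)))
  have h1 : 0 ≤ f' c := h0 c (hsub (Set.Ioo_subset_Icc_self hc))
  have h2 : 0 ≤ (f v - f u) / (v - u) := hceq ▸ h1
  have := mul_nonneg h2 (le_of_lt (sub_pos.2 h))
  rw [div_mul_cancel₀] at this
  · linarith
  · exact ne_of_gt (sub_pos.2 h)

/-- Second derivative test: f(1)=0, f'(1)=0, f''≥0 on [a,b] ∋ 1 ⇒ f ≥ 0 on [a,b]. -/
lemma nonneg_of_deriv2 (a b : ℝ) (f f' f'' : ℝ → ℝ)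
    (hd1 : ∀ x ∈ Set.Icc a b, HasDerivAt f (f' x) x)
    (hd2 : ∀ x ∈ Set.Icc a b, HasDerivAt f' (f'' x) x)
    (h2 : ∀ x ∈ Set.Icc a b, 0 ≤ f'' x)
    (ha : a ≤ 1) (hb : 1 ≤ b) (hf1 : f 1 = 0) (hf'1 : f' 1 = 0) :
    ∀ x ∈ Set.Icc a b, 0 ≤ f x := by
  have h1m : (1:ℝ) ∈ Set.Icc a b := ⟨ha, hb⟩
  have hmono := mono_on_of_deriv a b f' f'' hd2 h2
  intro x hx
  rcases le_total 1 x with hx1 | hx1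
  · -- f increasing on [1, x]
    have : f 1 ≤ f x := by
      apply mono_on_of_deriv 1 b f f'
        (fun y hy => hd1 y ⟨le_trans ha hy.1, hy.2⟩)
        (fun y hy => by
          have := hmono 1 h1m y ⟨le_trans ha hy.1, hy.2⟩ hy.1
          linarith [hf'1])
        1 ⟨le_refl _, hb⟩ x ⟨hx1, hx.2⟩ hx1
    linarith
  · -- -f increasing on [a, 1] i.e. f decreasing
    have : f x ≥ f 1 := by
      have := mono_on_of_deriv a 1 (fun y => -f y) (fun y => -f' y)
        (fun y hy => (hd1 y ⟨hy.1, le_trans hy.2 hb⟩).neg)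
        (fun y hy => by
          have := hmono y ⟨hy.1, le_trans hy.2 hb⟩ 1 h1m hy.2
          show (0:ℝ) ≤ -f' y
          linarith [hf'1])
        x ⟨hx.1, hx1⟩ 1 ⟨ha, le_refl _⟩ hx1
      have h2' : -f x ≤ -f 1 := this
      linarith
    linarith

noncomputable def phiF (t x : ℝ) : ℝ := (x ^ t - 1 - t * (x - 1)) / (t * (t - 1))
noncomputable def phiD (t x : ℝ) : ℝ := (x ^ (t - 1) - 1) / (t - 1)
noncomputable def psiF (s x : ℝ) : ℝ :=
  if s = 0 then Real.log (2 / (1 + x)) + (x - 1) / 2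
  else if s = 1 then ((1 + x) / 2) * Real.log ((1 + x) / 2) - (x - 1) / 2
  else (((1 + x) / 2) ^ s - 1 - s * (x - 1) / 2) / (s * (s - 1))
noncomputable def psiD (s x : ℝ) : ℝ :=
  if s = 0 then 1 / 2 - 1 / (1 + x)
  else if s = 1 then Real.log ((1 + x) / 2) / 2
  else (((1 + x) / 2) ^ (s - 1) - 1) / (2 * (s - 1))
noncomputable def psiDD (s x : ℝ) : ℝ := (1 / 4) * ((1 + x) / 2) ^ (s - 2)

lemma psiF_eq0 : psiF 0 = fun x => Real.log (2 / (1 + x)) + (x - 1) / 2 := by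
  funext x; simp [psiF]
lemma psiF_eq1 : psiF 1 = fun x => ((1 + x) / 2) * Real.log ((1 + x) / 2) - (x - 1) / 2 := by
  funext x; simp [psiF]
lemma psiF_eqs {s : ℝ} (hs0 : s ≠ 0) (hs1 : s ≠ 1) :
    psiF s = fun x => (((1 + x) / 2) ^ s - 1 - s * (x - 1) / 2) / (s * (s - 1)) := by
  funext x; simp [psiF, hs0, hs1]
lemma psiD_eq0 : psiD 0 = fun x => 1 / 2 - 1 / (1 + x) := by
  funext x; simp [psiD]
lemma psiD_eq1 : psiD 1 = fun x => Real.log ((1 + x) / 2) / 2 := by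
  funext x; simp [psiD]
lemma psiD_eqs {s : ℝ} (hs0 : s ≠ 0) (hs1 : s ≠ 1) :
    psiD s = fun x => (((1 + x) / 2) ^ (s - 1) - 1) / (2 * (s - 1)) := by
  funext x; simp [psiD, hs0, hs1]
lemma phiF_eq (t : ℝ) : phiF t = fun x => (x ^ t - 1 - t * (x - 1)) / (t * (t - 1)) := rfl
lemma phiD_eq (t : ℝ) : phiD t = fun x => (x ^ (t - 1) - 1) / (t - 1) := rfl

lemma phiF_deriv (t : ℝ) (ht : 2 ≤ t) {x : ℝ} (hx : 0 < x) :
    HasDerivAt (phiF t) (phiD t x) x := by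
  have h1 : HasDerivAt (fun y : ℝ => y ^ t) (t * x ^ (t - 1)) x :=
    Real.hasDerivAt_rpow_const (Or.inl hx.ne')
  have h2 := ((h1.sub_const 1).sub
    (((hasDerivAt_id x).sub_const 1).const_mul t)).div_const (t * (t - 1))
  rw [phiF_eq, phiD_eq]
  refine h2.congr_deriv (Eq.symm ?_)
  have htne : t - 1 ≠ 0 := by intro h; linarith
  have htne0 : t ≠ 0 := by intro h; linarith
  field_simp
  try ring

lemma phiD_deriv (t : ℝ) (ht : 2 ≤ t) {x : ℝ} (hx : 0 < x) :
    HasDerivAt (phiD t) (x ^ (t - 2)) x := by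
  have h1 : HasDerivAt (fun y : ℝ => y ^ (t - 1)) ((t - 1) * x ^ (t - 1 - 1)) x :=
    Real.hasDerivAt_rpow_const (Or.inl hx.ne')
  have h3 := (h1.sub_const 1).div_const (t - 1)
  rw [phiD_eq]
  refine h3.congr_deriv (Eq.symm ?_)
  have htne : t - 1 ≠ 0 := by intro h; linarith
  rw [show t - 1 - 1 = t - 2 by ring]
  field_simp

lemma half_deriv (x : ℝ) : HasDerivAt (fun y : ℝ => (1 + y) / 2) (1 / 2) x := by
  have := ((hasDerivAt_id x).const_add 1).div_const 2
  simpa using this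

lemma psiF_deriv (s : ℝ) {x : ℝ} (hx : 0 < x) :
    HasDerivAt (psiF s) (psiD s x) x := by
  have hb : (0:ℝ) < (1 + x) / 2 := by linarith
  have h1x : (0:ℝ) < 1 + x := by linarith
  rcases eq_or_ne s 0 with rfl | hs0
  · rw [psiF_eq0, psiD_eq0]
    have hd : HasDerivAt (fun y : ℝ => 2 / (1 + y))
        ((0 * (1 + x) - 2 * 1) / (1 + x) ^ 2) x :=
      (hasDerivAt_const x 2).div ((hasDerivAt_id x).const_add 1) h1x.ne'
    have hlog := hd.log (by positivity)
    have h2 := hlog.add (((hasDerivAt_id x).sub_const 1).div_const 2)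
    refine h2.congr_deriv (Eq.symm ?_)
    field_simp
    try ring
  rcases eq_or_ne s 1 with rfl | hs1
  · rw [psiF_eq1, psiD_eq1]
    have h1 := half_deriv x
    have hlog := h1.log hb.ne'
    have h2 := (h1.mul hlog).sub (((hasDerivAt_id x).sub_const 1).div_const 2)
    refine h2.congr_deriv (Eq.symm ?_)
    field_simp
    try ring
  · rw [psiF_eqs hs0 hs1, psiD_eqs hs0 hs1]
    have h1 := half_deriv x
    have hpow : HasDerivAt (fun y : ℝ => ((1 + y) / 2) ^ s)
        (1 / 2 * s * ((1 + x) / 2) ^ (s - 1)) x :=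
      h1.rpow_const (Or.inl hb.ne')
    have h2 := ((hpow.sub_const 1).sub
      ((((hasDerivAt_id x).sub_const 1).const_mul s).div_const 2)).div_const (s * (s - 1))
    refine h2.congr_deriv (Eq.symm ?_)
    have h3 : s - 1 ≠ 0 := sub_ne_zero.2 hs1
    field_simp

lemma psiD_deriv (s : ℝ) {x : ℝ} (hx : 0 < x) :
    HasDerivAt (psiD s) (psiDD s x) x := by
  have hb : (0:ℝ) < (1 + x) / 2 := by linarith
  have h1x : (0:ℝ) < 1 + x := by linarith
  rcases eq_or_ne s 0 with rfl | hs0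
  · rw [psiD_eq0]
    have hd : HasDerivAt (fun y : ℝ => 1 / (1 + y))
        ((0 * (1 + x) - 1 * 1) / (1 + x) ^ 2) x :=
      (hasDerivAt_const x 1).div ((hasDerivAt_id x).const_add 1) h1x.ne'
    have h2 := (hasDerivAt_const x (1/2 : ℝ)).sub hd
    refine h2.congr_deriv (Eq.symm ?_)
    unfold psiDD
    rw [show (0:ℝ) - 2 = -((2:ℕ):ℝ) by norm_num, Real.rpow_neg hb.le, Real.rpow_natCast]
    field_simp
    ring
  rcases eq_or_ne s 1 with rfl | hs1
  · rw [psiD_eq1]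
    have h1 := half_deriv x
    have h2 := (h1.log hb.ne').div_const 2
    refine h2.congr_deriv (Eq.symm ?_)
    unfold psiDD
    rw [show (1:ℝ) - 2 = -((1:ℕ):ℝ) by norm_num, Real.rpow_neg hb.le, Real.rpow_natCast]
    field_simp
    ring
  · rw [psiD_eqs hs0 hs1]
    have h1 := half_deriv x
    have hpow : HasDerivAt (fun y : ℝ => ((1 + y) / 2) ^ (s - 1))
        (1 / 2 * (s - 1) * ((1 + x) / 2) ^ (s - 1 - 1)) x :=
      h1.rpow_const (Or.inl hb.ne')
    have h2 := (hpow.sub_const 1).div_const (2 * (s - 1))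
    refine h2.congr_deriv (Eq.symm ?_)
    unfold psiDD
    have h3 : s - 1 ≠ 0 := sub_ne_zero.2 hs1
    rw [show s - 1 - 1 = s - 2 by ring]
    field_simp
    ring

lemma phiF_one (t : ℝ) : phiF t 1 = 0 := by simp [phiF]
lemma phiD_one (t : ℝ) : phiD t 1 = 0 := by simp [phiD]
lemma psiF_one (s : ℝ) : psiF s 1 = 0 := by
  rcases eq_or_ne s 0 with rfl | hs0
  · rw [psiF_eq0]; norm_num
  rcases eq_or_ne s 1 with rfl | hs1
  · rw [psiF_eq1]; norm_num
  · rw [psiF_eqs hs0 hs1]; norm_num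
lemma psiD_one (s : ℝ) : psiD s 1 = 0 := by
  rcases eq_or_ne s 0 with rfl | hs0
  · rw [psiD_eq0]; norm_num
  rcases eq_or_ne s 1 with rfl | hs1
  · rw [psiD_eq1]; norm_num
  · rw [psiD_eqs hs0 hs1]; norm_num

lemma ineqR (s t : ℝ) (hst : s ≤ t) (ht : 2 ≤ t) (R : ℝ) {u : ℝ}
    (hu : 0 < u) (huR : u ≤ R) :
    1 / (4 * R ^ (t - 2)) * ((R + 1) / 2) ^ (s - 2) * u ^ (t - 2) ≤ psiDD s u := by
  have hR0 : (0:ℝ) < R := lt_of_lt_of_le hu huR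
  have ht2 : (0:ℝ) ≤ t - 2 := by linarith
  have h1u : (0:ℝ) < 1 + u := by linarith
  have h1R : (0:ℝ) < 1 + R := by linarith
  have step1 : (u / R) ^ (t - 2) ≤ ((1 + u) / (1 + R)) ^ (t - 2) := by
    apply Real.rpow_le_rpow (by positivity) _ ht2
    rw [div_le_div_iff₀ hR0 h1R]
    nlinarith
  have step2 : ((1 + u) / (1 + R)) ^ (t - 2) ≤ ((1 + u) / (1 + R)) ^ (s - 2) := by
    apply Real.rpow_le_rpow_of_exponent_ge (by positivity) _ (by linarith)
    rw [div_le_one h1R]; linarith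
  have step3 : ((1 + u) / (1 + R)) ^ (s - 2)
      = ((1 + u) / 2) ^ (s - 2) / ((R + 1) / 2) ^ (s - 2) := by
    have hbase : (1 + u) / (1 + R) = ((1 + u) / 2) / ((R + 1) / 2) := by
      rw [div_div_div_comm]
      norm_num
      rw [add_comm]
      ring_nf
    rw [hbase, Real.div_rpow (by positivity) (by positivity)]
  have hA : (0:ℝ) < ((R + 1) / 2) ^ (s - 2) := Real.rpow_pos_of_pos (by linarith) _
  have key : ((R + 1) / 2) ^ (s - 2) * (u ^ (t - 2) / R ^ (t - 2)) ≤ ((1 + u) / 2) ^ (s - 2) := by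
    rw [← Real.div_rpow hu.le hR0.le]
    calc ((R + 1) / 2) ^ (s - 2) * (u / R) ^ (t - 2)
        ≤ ((R + 1) / 2) ^ (s - 2) * ((1 + u) / (1 + R)) ^ (s - 2) := by
          apply mul_le_mul_of_nonneg_left (le_trans step1 step2) hA.le
      _ = ((1 + u) / 2) ^ (s - 2) := by
          rw [step3, mul_div_cancel₀ _ (ne_of_gt hA)]
  have hC : (0:ℝ) < R ^ (t - 2) := Real.rpow_pos_of_pos hR0 _
  have heq : 1 / (4 * R ^ (t - 2)) * ((R + 1) / 2) ^ (s - 2) * u ^ (t - 2)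
      = 1 / 4 * (((R + 1) / 2) ^ (s - 2) * (u ^ (t - 2) / R ^ (t - 2))) := by
    field_simp
    try ring
  rw [heq]
  unfold psiDD
  linarith

lemma ineqr (s t : ℝ) (hst : s ≤ t) (ht : 2 ≤ t) (r : ℝ) {u : ℝ}
    (hr : 0 < r) (hru : r ≤ u) :
    psiDD s u ≤ 1 / (4 * r ^ (t - 2)) * ((r + 1) / 2) ^ (s - 2) * u ^ (t - 2) := by
  have hu : (0:ℝ) < u := lt_of_lt_of_le hr hru
  have ht2 : (0:ℝ) ≤ t - 2 := by linarith
  have h1u : (0:ℝ) < 1 + u := by linarith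
  have h1r : (0:ℝ) < 1 + r := by linarith
  have step1 : ((1 + u) / (1 + r)) ^ (t - 2) ≤ (u / r) ^ (t - 2) := by
    apply Real.rpow_le_rpow (by positivity) _ ht2
    rw [div_le_div_iff₀ h1r hr]
    nlinarith
  have step2 : ((1 + u) / (1 + r)) ^ (s - 2) ≤ ((1 + u) / (1 + r)) ^ (t - 2) := by
    apply Real.rpow_le_rpow_of_exponent_le _ (by linarith)
    rw [le_div_iff₀ h1r]; linarith
  have step3 : ((1 + u) / (1 + r)) ^ (s - 2)
      = ((1 + u) / 2) ^ (s - 2) / ((r + 1) / 2) ^ (s - 2) := by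
    have hbase : (1 + u) / (1 + r) = ((1 + u) / 2) / ((r + 1) / 2) := by
      rw [div_div_div_comm]
      norm_num
      rw [add_comm]
      ring_nf
    rw [hbase, Real.div_rpow (by positivity) (by positivity)]
  have hA : (0:ℝ) < ((r + 1) / 2) ^ (s - 2) := Real.rpow_pos_of_pos (by linarith) _
  have key : ((1 + u) / 2) ^ (s - 2) ≤ ((r + 1) / 2) ^ (s - 2) * (u ^ (t - 2) / r ^ (t - 2)) := by
    rw [← Real.div_rpow hu.le hr.le]
    calc ((1 + u) / 2) ^ (s - 2)
        = ((r + 1) / 2) ^ (s - 2) * ((1 + u) / (1 + r)) ^ (s - 2) := by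
          rw [step3, mul_div_cancel₀ _ (ne_of_gt hA)]
      _ ≤ ((r + 1) / 2) ^ (s - 2) * (u / r) ^ (t - 2) := by
          apply mul_le_mul_of_nonneg_left (le_trans step2 step1) hA.le
  have hC : (0:ℝ) < r ^ (t - 2) := Real.rpow_pos_of_pos hr _
  have heq : 1 / (4 * r ^ (t - 2)) * ((r + 1) / 2) ^ (s - 2) * u ^ (t - 2)
      = 1 / 4 * (((r + 1) / 2) ^ (s - 2) * (u ^ (t - 2) / r ^ (t - 2))) := by
    field_simp
    try ring
  rw [heq]
  unfold psiDD
  linarith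


lemma pointwise (s t : ℝ) (hst : s ≤ t) (ht : 2 ≤ t) (r R : ℝ) (hr : 0 < r)
    (hr1 : r ≤ 1) (h1R : 1 ≤ R) {x : ℝ} (hx : x ∈ Set.Icc r R) :
    1 / (4 * R ^ (t - 2)) * ((R + 1) / 2) ^ (s - 2) * phiF t x ≤ psiF s x ∧
      psiF s x ≤ 1 / (4 * r ^ (t - 2)) * ((r + 1) / 2) ^ (s - 2) * phiF t x := by
  set cR := 1 / (4 * R ^ (t - 2)) * ((R + 1) / 2) ^ (s - 2) with hcR
  set cr := 1 / (4 * r ^ (t - 2)) * ((r + 1) / 2) ^ (s - 2) with hcr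
  have hpos : ∀ y ∈ Set.Icc r R, (0:ℝ) < y := fun y hy => lt_of_lt_of_le hr hy.1
  constructor
  · have := nonneg_of_deriv2 r R
      (fun y => psiF s y - cR * phiF t y)
      (fun y => psiD s y - cR * phiD t y)
      (fun y => psiDD s y - cR * y ^ (t - 2))
      (fun y hy => (psiF_deriv s (hpos y hy)).sub ((phiF_deriv t ht (hpos y hy)).const_mul cR))
      (fun y hy => (psiD_deriv s (hpos y hy)).sub ((phiD_deriv t ht (hpos y hy)).const_mul cR))
      (fun y hy => by
        have := ineqR s t hst ht R (hpos y hy) hy.2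
        rw [hcR]; linarith)
      hr1 h1R (by simp [psiF_one, phiF_one]) (by simp [psiD_one, phiD_one])
      x hx
    linarith
  · have := nonneg_of_deriv2 r R
      (fun y => cr * phiF t y - psiF s y)
      (fun y => cr * phiD t y - psiD s y)
      (fun y => cr * y ^ (t - 2) - psiDD s y)
      (fun y hy => ((phiF_deriv t ht (hpos y hy)).const_mul cr).sub (psiF_deriv s (hpos y hy)))
      (fun y hy => ((phiD_deriv t ht (hpos y hy)).const_mul cr).sub (psiD_deriv s (hpos y hy)))
      (fun y hy => by
        have := ineqr s t hst ht r hr hy.1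
        rw [hcr]; linarith)
      hr1 h1R (by simp [psiF_one, phiF_one]) (by simp [psiD_one, phiD_one])
      x hx
    linarith

lemma Phi_sum (t : ℝ) (ht0 : t ≠ 0) (ht1 : t ≠ 1) (n : ℕ) (p q : Fin n → ℝ)
    (hp : ∀ i, 0 < p i) (hq : ∀ i, 0 < q i)
    (hp1 : ∑ i, p i = 1) (hq1 : ∑ i, q i = 1) :
    Phi n t p q = ∑ i, q i * phiF t (p i / q i) := by
  unfold Phi
  rw [if_neg ht0, if_neg ht1]
  have hterm : ∀ i, q i * phiF t (p i / q i)
      = (t * (t - 1))⁻¹ * (p i ^ t * q i ^ (1 - t) - q i - t * (p i - q i)) := by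
    intro i
    unfold phiF
    have hqi : q i ≠ 0 := (hq i).ne'
    have e1 : (p i / q i) ^ t = p i ^ t / q i ^ t := Real.div_rpow (hp i).le (hq i).le t
    have e2 : q i ^ (1 - t) = q i / q i ^ t := by
      rw [Real.rpow_sub (hq i), Real.rpow_one]
    have hqt : q i ^ t ≠ 0 := (Real.rpow_pos_of_pos (hq i) t).ne'
    rw [e1, e2]
    generalize hB : p i ^ t = B
    generalize hC : q i ^ t = C
    generalize hX : p i / q i = X
    have hx : q i * X = p i := by rw [← hX, mul_comm]; exact div_mul_cancel₀ _ hqi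
    rw [← hx]
    have ht1' : t - 1 ≠ 0 := sub_ne_zero.2 ht1
    rw [hC] at hqt
    field_simp
  rw [Finset.sum_congr rfl (fun i _ => hterm i), ← Finset.mul_sum]
  congr 1
  rw [Finset.sum_sub_distrib, Finset.sum_sub_distrib, ← Finset.mul_sum,
    Finset.sum_sub_distrib, hp1, hq1]
  ring

lemma Omega_sum (s : ℝ) (n : ℕ) (p q : Fin n → ℝ)
    (hp : ∀ i, 0 < p i) (hq : ∀ i, 0 < q i)
    (hp1 : ∑ i, p i = 1) (hq1 : ∑ i, q i = 1) :
    Omega n s q p = ∑ i, q i * psiF s (p i / q i) := by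
  have hqi : ∀ i, q i ≠ 0 := fun i => (hq i).ne'
  have hqppos : ∀ i, (0:ℝ) < q i + p i := fun i => by have := hp i; have := hq i; linarith
  have hdivpos : ∀ i, (0:ℝ) < 1 + p i / q i := fun i => by
    have := div_pos (hp i) (hq i); linarith
  unfold Omega
  rcases eq_or_ne s 0 with rfl | hs0
  · rw [if_pos rfl]
    have hterm : ∀ i, q i * psiF 0 (p i / q i)
        = q i * Real.log (2 * q i / (q i + p i)) + (p i - q i) / 2 := by
      intro i
      rw [psiF_eq0]
      dsimp only
      have hbase : 2 / (1 + p i / q i) = 2 * q i / (q i + p i) := by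
        rw [div_eq_div_iff (hdivpos i).ne' (hqppos i).ne']
        field_simp [hqi i]
      rw [hbase]
      generalize hL : Real.log (2 * q i / (q i + p i)) = L
      generalize hX : p i / q i = X
      have hx : q i * X = p i := by rw [← hX, mul_comm]; exact div_mul_cancel₀ _ (hqi i)
      rw [← hx]
      field_simp [hqi i]
    rw [Finset.sum_congr rfl (fun i _ => hterm i), Finset.sum_add_distrib,
      ← Finset.sum_div, Finset.sum_sub_distrib, hp1, hq1]
    norm_num
  rcases eq_or_ne s 1 with rfl | hs1
  · rw [if_neg one_ne_zero, if_pos rfl]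
    have hterm : ∀ i, q i * psiF 1 (p i / q i)
        = ((q i + p i) / 2) * Real.log ((q i + p i) / (2 * q i)) - (p i - q i) / 2 := by
      intro i
      rw [psiF_eq1]
      dsimp only
      have hbase : (1 + p i / q i) / 2 = (q i + p i) / (2 * q i) := by
        rw [div_eq_div_iff (two_ne_zero) (by have := hq i; positivity)]
        field_simp [hqi i]
      rw [hbase]
      generalize hL : Real.log ((q i + p i) / (2 * q i)) = L
      generalize hX : p i / q i = X
      have hx : q i * X = p i := by rw [← hX, mul_comm]; exact div_mul_cancel₀ _ (hqi i)
      rw [← hx]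
      field_simp [hqi i]
    rw [Finset.sum_congr rfl (fun i _ => hterm i), Finset.sum_sub_distrib,
      ← Finset.sum_div, Finset.sum_sub_distrib, hp1, hq1]
    norm_num
  · rw [if_neg hs0, if_neg hs1]
    have hterm : ∀ i, q i * psiF s (p i / q i)
        = (s * (s - 1))⁻¹ * (q i * ((q i + p i) / (2 * q i)) ^ s - q i - s * (p i - q i) / 2) := by
      intro i
      rw [psiF_eqs hs0 hs1]
      dsimp only
      have hbase : (1 + p i / q i) / 2 = (q i + p i) / (2 * q i) := by
        rw [div_eq_div_iff (two_ne_zero) (by have := hq i; positivity)]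
        field_simp [hqi i]
      rw [hbase]
      generalize hA : ((q i + p i) / (2 * q i)) ^ s = A
      generalize hX : p i / q i = X
      have hx : q i * X = p i := by rw [← hX, mul_comm]; exact div_mul_cancel₀ _ (hqi i)
      rw [← hx]
      have hs1' : s - 1 ≠ 0 := sub_ne_zero.2 hs1
      field_simp [hqi i]
    rw [Finset.sum_congr rfl (fun i _ => hterm i), ← Finset.mul_sum]
    congr 1
    rw [Finset.sum_sub_distrib, Finset.sum_sub_distrib, ← Finset.sum_div,
      ← Finset.mul_sum, Finset.sum_sub_distrib, hp1, hq1]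
    ring


theorem stmt_6 (s t : ℝ) (hst : s ≤ t) (ht : 2 ≤ t)
    (n : ℕ) (hn : 2 ≤ n) (p q : Fin n → ℝ)
    (hp : ∀ i, 0 < p i) (hq : ∀ i, 0 < q i)
    (hp1 : ∑ i, p i = 1) (hq1 : ∑ i, q i = 1)
    (r R : ℝ) (hr : 0 < r) (hrR : r ≤ R)
    (hbound : ∀ i, r ≤ p i / q i ∧ p i / q i ≤ R) :
    (1 / (4 * R ^ (t - 2))) * ((R + 1) / 2) ^ (s - 2) * Phi n t p q ≤ Omega n s q p ∧
      Omega n s q p ≤ (1 / (4 * r ^ (t - 2))) * ((r + 1) / 2) ^ (s - 2) * Phi n t p q := by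
  have ht0 : t ≠ 0 := by intro h; rw [h] at ht; norm_num at ht
  have ht1 : t ≠ 1 := by intro h; rw [h] at ht; norm_num at ht
  have hr1 : r ≤ 1 := by
    have h : ∀ i ∈ Finset.univ, r * q i ≤ p i := fun i _ => by
      have hb := (hbound i).1
      rw [le_div_iff₀ (hq i)] at hb
      linarith
    have hs' := Finset.sum_le_sum h
    rw [← Finset.mul_sum, hq1, mul_one, hp1] at hs'
    exact hs'
  have h1R : 1 ≤ R := by
    have h : ∀ i ∈ Finset.univ, p i ≤ R * q i := fun i _ => by
      have hb := (hbound i).2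
      rw [div_le_iff₀ (hq i)] at hb
      linarith
    have hs' := Finset.sum_le_sum h
    rw [← Finset.mul_sum, hq1, mul_one, hp1] at hs'
    exact hs'
  have hx : ∀ i, p i / q i ∈ Set.Icc r R := fun i => ⟨(hbound i).1, (hbound i).2⟩
  rw [Phi_sum t ht0 ht1 n p q hp hq hp1 hq1, Omega_sum s n p q hp hq hp1 hq1]
  constructor
  · rw [Finset.mul_sum]
    apply Finset.sum_le_sum
    intro i _
    have hpt := (pointwise s t hst ht r R hr hr1 h1R (hx i)).1
    calc 1 / (4 * R ^ (t - 2)) * ((R + 1) / 2) ^ (s - 2) * (q i * phiF t (p i / q i))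
        = q i * (1 / (4 * R ^ (t - 2)) * ((R + 1) / 2) ^ (s - 2) * phiF t (p i / q i)) := by
          ring
      _ ≤ q i * psiF s (p i / q i) := mul_le_mul_of_nonneg_left hpt (hq i).le
  · rw [Finset.mul_sum]
    apply Finset.sum_le_sum
    intro i _
    have hpt := (pointwise s t hst ht r R hr hr1 h1R (hx i)).2
    calc q i * psiF s (p i / q i)
        ≤ q i * (1 / (4 * r ^ (t - 2)) * ((r + 1) / 2) ^ (s - 2) * phiF t (p i / q i)) :=
          mul_le_mul_of_nonneg_left hpt (hq i).le
      _ = 1 / (4 * r ^ (t - 2)) * ((r + 1) / 2) ^ (s - 2) * (q i * phiF t (p i / q i)) := by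
          ring
end

section
/- Let s, t ∈ ℝ with 0 ≤ s ≤ 4, t ≤ −1, and s + t ≤ 1. Then for all P, Q ∈ Γ_n with r ≤ p_i/q_i ≤ R for all i: ((r+1)/(2r))^{s−3} (((4−s)r + s)/(4r^{t+2})) Φ_t(P||Q) ≤ ζ_s(Q||P) ≤ ((R+1)/(2R))^{s−3} (((4−s)R + s)/(4R^{t+2})) Φ_t(P||Q). -/
open Real Finset

noncomputable def fF (t x : ℝ) : ℝ := (t*(t-1))⁻¹ * (x ^ t - 1)
noncomputable def fF1 (t x : ℝ) : ℝ := (t-1)⁻¹ * x ^ (t-1)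

lemma fF_deriv {t x : ℝ} (ht0 : t ≠ 0) (ht1 : t ≠ 1) (hx : 0 < x) :
    HasDerivAt (fF t) (fF1 t x) x := by
  have h := ((Real.hasDerivAt_rpow_const (p := t) (Or.inl hx.ne')).sub_const 1).const_mul (t*(t-1))⁻¹
  refine h.congr_deriv ?_
  unfold fF1
  have h1 : t - 1 ≠ 0 := sub_ne_zero.2 ht1
  field_simp

lemma fF1_deriv {t x : ℝ} (ht1 : t ≠ 1) (hx : 0 < x) :
    HasDerivAt (fF1 t) (x ^ (t-2)) x := by
  have h := (Real.hasDerivAt_rpow_const (p := t-1) (Or.inl hx.ne')).const_mul (t-1)⁻¹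
  refine h.congr_deriv ?_
  have h1 : t - 1 ≠ 0 := sub_ne_zero.2 ht1
  rw [show t-1-1 = t-2 by ring]
  field_simp

lemma hphi {x : ℝ} (hx : 0 < x) : HasDerivAt (fun y => (y+1)/(2*y)) (-(1/(2*x^2))) x := by
  have h := ((hasDerivAt_id x).add_const 1).div ((hasDerivAt_id x).const_mul 2) (by positivity)
  refine h.congr_deriv ?_
  simp only [Pi.sub_apply, id]
  field_simp
  ring

lemma hphipow {x : ℝ} (hx : 0 < x) (a : ℝ) :
    HasDerivAt (fun y => ((y+1)/(2*y))^a) (-(1/(2*x^2)) * a * ((x+1)/(2*x))^(a-1)) x :=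
  (hphi hx).rpow_const (Or.inl (by positivity))

noncomputable def gG (s x : ℝ) : ℝ :=
  if s = 1 then (1-x) * Real.log ((x+1)/(2*x))
  else (s-1)⁻¹ * ((1-x) * ((x+1)/(2*x)) ^ (s-1))

noncomputable def gG1 (s x : ℝ) : ℝ :=
  if s = 1 then -Real.log ((x+1)/(2*x)) - (1-x)/(x*(x+1))
  else (s-1)⁻¹ * (-(((x+1)/(2*x)) ^ (s-1))) - (1-x)/(2*x^2) * ((x+1)/(2*x)) ^ (s-2)

noncomputable def gG2 (s x : ℝ) : ℝ := ((x+1)/(2*x)) ^ (s-3) * ((4-s)*x+s) / (4*x^4)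

lemma gG_deriv {s x : ℝ} (hx : 0 < x) : HasDerivAt (gG s) (gG1 s x) x := by
  unfold gG gG1
  split_ifs with h
  · have hlog : HasDerivAt (fun y => Real.log ((y+1)/(2*y))) (-(1/(2*x^2)) / ((x+1)/(2*x))) x :=
      (hphi hx).log (by positivity)
    have h2 := ((hasDerivAt_const x (1:ℝ)).sub (hasDerivAt_id x)).mul hlog
    refine h2.congr_deriv ?_
    simp only [Pi.sub_apply, id]
    field_simp
    ring
  · have h2 := (((hasDerivAt_const x (1:ℝ)).sub (hasDerivAt_id x)).mul (hphipow hx (s-1))).const_mul (s-1)⁻¹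
    refine h2.congr_deriv ?_
    simp only [Pi.sub_apply, id]
    rw [show s-1-1 = s-2 by ring]
    have h1 : s - 1 ≠ 0 := sub_ne_zero.2 h
    field_simp
    ring

lemma gG1_deriv {s x : ℝ} (hx : 0 < x) : HasDerivAt (gG1 s) (gG2 s x) x := by
  have hφ : (0:ℝ) < (x+1)/(2*x) := by positivity
  unfold gG1 gG2
  split_ifs with h
  · have hlog : HasDerivAt (fun y => Real.log ((y+1)/(2*y))) (-(1/(2*x^2)) / ((x+1)/(2*x))) x :=
      (hphi hx).log (by positivity)
    have hden : HasDerivAt (fun y => y*(y+1)) (1*(x+1) + x*1) x :=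
      (hasDerivAt_id x).mul ((hasDerivAt_id x).add_const 1)
    have hq : HasDerivAt (fun y => (1-y)/(y*(y+1)))
        (((-1)*(x*(x+1)) - (1-x)*(1*(x+1)+x*1))/(x*(x+1))^2) x := by
      have := ((hasDerivAt_const x (1:ℝ)).sub (hasDerivAt_id x)).div hden (by positivity)
      refine this.congr_deriv ?_
      norm_num
    have h2 := hlog.neg.sub hq
    refine h2.congr_deriv ?_
    subst h
    rw [show (1:ℝ)-3 = -2 by norm_num]
    have hpw : ((x+1)/(2*x))^(-2:ℝ) = (((x+1)/(2*x))^(2:ℕ))⁻¹ := by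
      rw [← Real.rpow_natCast _ 2, ← Real.rpow_neg hφ.le]
      norm_num
    rw [hpw]
    field_simp
    ring
  · have h1 : s - 1 ≠ 0 := sub_ne_zero.2 h
    have ht1 := ((hphipow hx (s-1)).neg).const_mul (s-1)⁻¹
    have hden : HasDerivAt (fun y => 2*y^2) (2*(↑2*x^1)) x := (hasDerivAt_pow 2 x).const_mul 2
    have hq : HasDerivAt (fun y => (1-y)/(2*y^2))
        (((-1)*(2*x^2) - (1-x)*(2*(↑2*x^1)))/(2*x^2)^2) x := by
      have := ((hasDerivAt_const x (1:ℝ)).sub (hasDerivAt_id x)).div hden (by positivity)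
      refine this.congr_deriv ?_
      norm_num
    have h2 := ht1.sub (hq.mul (hphipow hx (s-2)))
    refine h2.congr_deriv ?_
    rw [show s-1-1 = s-2 by ring, show s-2-1 = s-3 by ring,
      show s-2 = (s-3)+1 by ring, Real.rpow_add_one hφ.ne']
    field_simp
    ring

noncomputable def psi (s t x : ℝ) : ℝ :=
  (s-3) * (Real.log (x+1) - Real.log (2*x)) + Real.log ((4-s)*x+s) - (t+2) * Real.log x

noncomputable def eta (s t c : ℝ) : ℝ := ((c+1)/(2*c)) ^ (s-3) * (((4-s)*c+s) / (4*c^(t+2)))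

lemma B_pos {s x : ℝ} (hs0 : 0 ≤ s) (hs4 : s ≤ 4) (hx : 0 < x) : 0 < (4-s)*x+s := by
  rcases eq_or_lt_of_le hs0 with h | h
  · nlinarith
  · nlinarith [mul_nonneg (by linarith : (0:ℝ) ≤ 4-s) hx.le]

lemma psi_deriv {s t x : ℝ} (hs0 : 0 ≤ s) (hs4 : s ≤ 4) (hx : 0 < x) :
    HasDerivAt (psi s t)
      ((s-3) * (1/(x+1) - 2/(2*x)) + (4-s)/((4-s)*x+s) - (t+2) * x⁻¹) x := by
  have hB := B_pos hs0 hs4 hx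
  have h1 : HasDerivAt (fun y => Real.log (y+1)) (1/(x+1)) x :=
    ((hasDerivAt_id x).add_const 1).log (by positivity)
  have h2 : HasDerivAt (fun y => Real.log (2*y)) (2/(2*x)) x := by
    have := ((hasDerivAt_id x).const_mul 2).log (by positivity : (2:ℝ)*x ≠ 0)
    refine this.congr_deriv ?_
    simp
  have h3 : HasDerivAt (fun y => Real.log ((4-s)*y+s)) ((4-s)/((4-s)*x+s)) x := by
    have := (((hasDerivAt_id x).const_mul (4-s)).add_const s).log (by simpa using hB.ne')
    refine this.congr_deriv ?_
    simp
  have h4 : HasDerivAt (fun y => (t+2) * Real.log y) ((t+2) * x⁻¹) x :=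
    (Real.hasDerivAt_log hx.ne').const_mul (t+2)
  exact (((h1.sub h2).const_mul (s-3)).add h3).sub h4

lemma psi_deriv_nonneg {s t x : ℝ} (hs0 : 0 ≤ s) (hs4 : s ≤ 4) (ht : t ≤ -1)
    (hst : s + t ≤ 1) (hx : 0 < x) :
    0 ≤ (s-3) * (1/(x+1) - 2/(2*x)) + (4-s)/((4-s)*x+s) - (t+2) * x⁻¹ := by
  have hB := B_pos hs0 hs4 hx
  set u : ℝ := -1 - t with hu
  have hu0 : 0 ≤ u := by simp [hu]; linarith
  have hus : s - 2 ≤ u := by simp [hu]; linarith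
  have hA : 0 ≤ (3-s)*((4-s)*x+s) + (4-s)*(x*(x+1)) - (t+2)*((x+1)*((4-s)*x+s)) := by
    have hkey : (3-s)*((4-s)*x+s) + (4-s)*(x*(x+1)) - (t+2)*((x+1)*((4-s)*x+s))
        = (2-s)*((6-s)*x+s) + u*((4-s)*x^2+4*x+s) := by rw [hu]; ring
    have hBq : 0 ≤ (4-s)*x^2+4*x+s := by nlinarith [mul_nonneg (by linarith : (0:ℝ) ≤ 4-s) (sq_nonneg x)]
    rcases le_total s 2 with h | h
    · rw [hkey]
      have : 0 ≤ (2-s)*((6-s)*x+s) := mul_nonneg (by linarith) (by nlinarith)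
      nlinarith [mul_nonneg hu0 hBq]
    · have hkey2 : (3-s)*((4-s)*x+s) + (4-s)*(x*(x+1)) - (t+2)*((x+1)*((4-s)*x+s))
          = (s-2)*(x*((4-s)*x+(s-2))) + (u-(s-2))*((4-s)*x^2+4*x+s) := by rw [hu]; ring
      rw [hkey2]
      have h1 : 0 ≤ (s-2)*(x*((4-s)*x+(s-2))) :=
        mul_nonneg (by linarith) (mul_nonneg hx.le (by nlinarith [mul_nonneg (by linarith : (0:ℝ) ≤ 4-s) hx.le]))
      nlinarith [mul_nonneg (by linarith : 0 ≤ u-(s-2)) hBq]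
  have heq : (s-3) * (1/(x+1) - 2/(2*x)) + (4-s)/((4-s)*x+s) - (t+2) * x⁻¹
      = ((3-s)*((4-s)*x+s) + (4-s)*(x*(x+1)) - (t+2)*((x+1)*((4-s)*x+s))) / (x*(x+1)*((4-s)*x+s)) := by
    have hB' : (4-s)*x+s ≠ 0 := hB.ne'
    generalize (4-s)*x+s = B at hB' ⊢
    field_simp
    ring
  rw [heq]
  positivity

lemma eta_eq_exp {s t c : ℝ} (hs0 : 0 ≤ s) (hs4 : s ≤ 4) (hc : 0 < c) :
    eta s t c = Real.exp (psi s t c) / 4 := by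
  have hB := B_pos hs0 hs4 hc
  unfold eta psi
  rw [Real.exp_sub, Real.exp_add, Real.exp_log hB]
  have h1 : Real.exp ((s-3) * (Real.log (c+1) - Real.log (2*c))) = ((c+1)/(2*c)) ^ (s-3) := by
    rw [Real.rpow_def_of_pos (by positivity), ← Real.log_div (by positivity) (by positivity),
      Real.log_div (by positivity : (0:ℝ) < c+1).ne' (by positivity : (0:ℝ) < 2*c).ne', mul_comm]
  have h2 : Real.exp ((t+2) * Real.log c) = c ^ (t+2) := by
    rw [Real.rpow_def_of_pos hc, mul_comm]
  rw [h1, h2]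
  have hcp : (0:ℝ) < c ^ (t+2) := Real.rpow_pos_of_pos hc _
  field_simp

lemma psi_mono {s t : ℝ} (hs0 : 0 ≤ s) (hs4 : s ≤ 4) (ht : t ≤ -1) (hst : s + t ≤ 1) :
    MonotoneOn (psi s t) (Set.Ioi 0) := by
  apply monotoneOn_of_deriv_nonneg (convex_Ioi 0)
  · exact fun x hx => ((psi_deriv hs0 hs4 hx).continuousAt).continuousWithinAt
  · rw [interior_Ioi]
    exact fun x hx => ((psi_deriv hs0 hs4 hx).differentiableAt).differentiableWithinAt
  · rw [interior_Ioi]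
    intro x hx
    rw [(psi_deriv hs0 hs4 hx).deriv]
    exact psi_deriv_nonneg hs0 hs4 ht hst hx

lemma eta_mono {s t a b : ℝ} (hs0 : 0 ≤ s) (hs4 : s ≤ 4) (ht : t ≤ -1) (hst : s + t ≤ 1)
    (ha : 0 < a) (hab : a ≤ b) : eta s t a ≤ eta s t b := by
  have hb : 0 < b := lt_of_lt_of_le ha hab
  rw [eta_eq_exp hs0 hs4 ha, eta_eq_exp hs0 hs4 hb]
  have := psi_mono hs0 hs4 ht hst (Set.mem_Ioi.2 ha) (Set.mem_Ioi.2 hb) hab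
  have := Real.exp_le_exp.2 this
  linarith

lemma gG2_eq_eta {s t x : ℝ} (hx : 0 < x) : gG2 s x = eta s t x * x ^ (t-2) := by
  unfold gG2 eta
  have h1 : x ^ (t-2) = x ^ (t+2) / x ^ (4:ℝ) := by
    rw [← Real.rpow_sub hx]; norm_num
    ring_nf
  have h2 : x ^ (4:ℝ) = x ^ (4:ℕ) := by
    rw [← Real.rpow_natCast x 4]; norm_num
  rw [h1, h2]
  have hp1 : (0:ℝ) < x ^ (t+2) := Real.rpow_pos_of_pos hx _
  field_simp

lemma hasDerivAt_comb {s t m : ℝ} (ht0 : t ≠ 0) (ht1 : t ≠ 1) {y : ℝ} (hy : 0 < y) :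
    HasDerivAt (fun z => gG s z - m * fF t z) (gG1 s y - m * fF1 t y) y :=
  (gG_deriv hy).sub ((fF_deriv ht0 ht1 hy).const_mul m)

lemma hasDerivAt_comb1 {s t m : ℝ} (ht1 : t ≠ 1) {y : ℝ} (hy : 0 < y) :
    HasDerivAt (fun z => gG1 s z - m * fF1 t z) (gG2 s y - m * y ^ (t-2)) y :=
  (gG1_deriv hy).sub ((fF1_deriv ht1 hy).const_mul m)

lemma deriv2_comb_s9 {s t m : ℝ} (ht0 : t ≠ 0) (ht1 : t ≠ 1) {y : ℝ} (hy : 0 < y) :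
    deriv (deriv (fun z => gG s z - m * fF t z)) y = gG2 s y - m * y ^ (t-2) := by
  have hEq : deriv (fun z => gG s z - m * fF t z) =ᶠ[nhds y] (fun z => gG1 s z - m * fF1 t z) := by
    filter_upwards [IsOpen.mem_nhds isOpen_Ioi (Set.mem_Ioi.2 hy)] with z hz
    exact (hasDerivAt_comb ht0 ht1 (Set.mem_Ioi.1 hz)).deriv
  rw [hEq.deriv_eq]
  exact (hasDerivAt_comb1 ht1 hy).deriv

lemma diff_deriv_comb {s t m : ℝ} (ht0 : t ≠ 0) (ht1 : t ≠ 1) {y : ℝ} (hy : 0 < y) :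
    DifferentiableAt ℝ (deriv (fun z => gG s z - m * fF t z)) y := by
  have hEq : deriv (fun z => gG s z - m * fF t z) =ᶠ[nhds y] (fun z => gG1 s z - m * fF1 t z) := by
    filter_upwards [IsOpen.mem_nhds isOpen_Ioi (Set.mem_Ioi.2 hy)] with z hz
    exact (hasDerivAt_comb ht0 ht1 (Set.mem_Ioi.1 hz)).deriv
  exact (hasDerivAt_comb1 ht1 hy).differentiableAt.congr_of_eventuallyEq hEq

lemma convex_low {s t r : ℝ} (hs0 : 0 ≤ s) (hs4 : s ≤ 4) (ht : t ≤ -1) (hst : s + t ≤ 1)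
    (hr : 0 < r) :
    ConvexOn ℝ (Set.Ici r) (fun z => gG s z - eta s t r * fF t z) := by
  have ht0 : t ≠ 0 := by linarith
  have ht1 : t ≠ 1 := by linarith
  have hpos : ∀ y : ℝ, y ∈ Set.Ici r → 0 < y := fun y hy => lt_of_lt_of_le hr hy
  apply convexOn_of_deriv2_nonneg (convex_Ici r)
  · exact fun y hy => ((hasDerivAt_comb ht0 ht1 (hpos y hy)).continuousAt).continuousWithinAt
  · rw [interior_Ici]
    exact fun y hy =>
      ((hasDerivAt_comb (s := s) (m := eta s t r) ht0 ht1 (hr.trans hy)).differentiableAt).differentiableWithinAt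
  · rw [interior_Ici]
    exact fun y hy => (diff_deriv_comb ht0 ht1 (hr.trans hy)).differentiableWithinAt
  · rw [interior_Ici]
    intro y hy
    have hy0 : 0 < y := hr.trans hy
    show 0 ≤ deriv (deriv (fun z => gG s z - eta s t r * fF t z)) y
    rw [deriv2_comb_s9 ht0 ht1 hy0, gG2_eq_eta (t := t) hy0, ← sub_mul]
    exact mul_nonneg (sub_nonneg.2 (eta_mono hs0 hs4 ht hst hr (le_of_lt hy)))
      (Real.rpow_pos_of_pos hy0 _).le

lemma convex_high {s t R : ℝ} (hs0 : 0 ≤ s) (hs4 : s ≤ 4) (ht : t ≤ -1) (hst : s + t ≤ 1)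
    (hR : 0 < R) :
    ConvexOn ℝ (Set.Ioc 0 R) (fun z => eta s t R * fF t z - gG s z) := by
  have ht0 : t ≠ 0 := by linarith
  have ht1 : t ≠ 1 := by linarith
  have hflip : ∀ y : ℝ, 0 < y →
      HasDerivAt (fun z => eta s t R * fF t z - gG s z)
        (-(gG1 s y - eta s t R * fF1 t y)) y := by
    intro y hy
    have := (hasDerivAt_comb (s := s) (m := eta s t R) ht0 ht1 hy).neg
    refine this.congr_of_eventuallyEq (Filter.Eventually.of_forall fun z => ?_)
    · simp only [Pi.neg_apply]; ring
  apply convexOn_of_deriv2_nonneg (convex_Ioc 0 R)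
  · exact fun y hy => ((hflip y hy.1).continuousAt).continuousWithinAt
  · rw [interior_Ioc]
    exact fun y hy => ((hflip y hy.1).differentiableAt).differentiableWithinAt
  · rw [interior_Ioc]
    intro y hy
    have hnegEq : (fun z => eta s t R * fF t z - gG s z)
        = (fun z => -(gG s z - eta s t R * fF t z)) := by funext z; ring
    have e1 : (deriv fun z => -(gG s z - eta s t R * fF t z))
        = fun x => -(deriv (fun z => gG s z - eta s t R * fF t z) x) :=
      funext fun x => deriv.neg
    rw [hnegEq, e1]
    exact ((diff_deriv_comb ht0 ht1 hy.1).neg).differentiableWithinAt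
  · rw [interior_Ioc]
    intro y hy
    have hy0 : 0 < y := hy.1
    have hnegEq : (fun z => eta s t R * fF t z - gG s z)
        = (fun z => -(gG s z - eta s t R * fF t z)) := by funext z; ring
    show 0 ≤ deriv (deriv (fun z => eta s t R * fF t z - gG s z)) y
    have e1 : (deriv fun z => -(gG s z - eta s t R * fF t z))
        = fun x => -(deriv (fun z => gG s z - eta s t R * fF t z) x) :=
      funext fun x => deriv.neg
    rw [hnegEq, e1]
    have e2 : deriv (fun x => -(deriv (fun z => gG s z - eta s t R * fF t z) x)) y
        = -(deriv (deriv (fun z => gG s z - eta s t R * fF t z)) y) := deriv.neg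
    rw [e2, deriv2_comb_s9 ht0 ht1 hy0, gG2_eq_eta (t := t) hy0]
    have : 0 ≤ (eta s t R - eta s t y) * y ^ (t-2) :=
      mul_nonneg (sub_nonneg.2 (eta_mono hs0 hs4 ht hst hy0 hy.2.le))
        (Real.rpow_pos_of_pos hy0 _).le
    nlinarith [this]

lemma gG_one {s : ℝ} : gG s 1 = 0 := by
  unfold gG; split_ifs <;> norm_num

lemma fF_one {t : ℝ} : fF t 1 = 0 := by
  unfold fF; rw [Real.one_rpow]; ring


theorem stmt_9 (s t : ℝ) (hs0 : 0 ≤ s) (hs4 : s ≤ 4) (ht : t ≤ -1) (hst : s + t ≤ 1)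
    (n : ℕ) (hn : 2 ≤ n) (p q : Fin n → ℝ)
    (hp : ∀ i, 0 < p i) (hq : ∀ i, 0 < q i)
    (hp1 : ∑ i, p i = 1) (hq1 : ∑ i, q i = 1)
    (r R : ℝ) (hr : 0 < r) (hrR : r ≤ R)
    (hbound : ∀ i, r ≤ p i / q i ∧ p i / q i ≤ R) :
    ((r + 1) / (2 * r)) ^ (s - 3) * (((4 - s) * r + s) / (4 * r ^ (t + 2))) * Phi n t p q ≤ zeta n s q p ∧
      zeta n s q p ≤ ((R + 1) / (2 * R)) ^ (s - 3) * (((4 - s) * R + s) / (4 * R ^ (t + 2))) * Phi n t p q := by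
  have ht0 : t ≠ 0 := by linarith
  have ht1 : t ≠ 1 := by linarith
  have hR : 0 < R := hr.trans_le hrR
  have hx : ∀ i, 0 < p i / q i := fun i => div_pos (hp i) (hq i)
  have hqp : ∀ i, q i * (1 - p i / q i) = q i - p i := fun i => by
    rw [mul_sub, mul_one, mul_div_cancel₀ _ (hq i).ne']
  have harg : ∀ i, (p i / q i + 1)/(2*(p i / q i)) = (q i + p i)/(2*p i) := fun i => by
    have h1 := (hp i).ne'
    have h2 := (hq i).ne'
    field_simp
    ring
  have hzeta : zeta n s q p = ∑ i, q i * gG s (p i / q i) := by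
    unfold zeta gG
    split_ifs with h
    · apply Finset.sum_congr rfl
      intro i _
      rw [harg i, ← hqp i]
      ring
    · rw [Finset.mul_sum]
      apply Finset.sum_congr rfl
      intro i _
      rw [harg i, ← hqp i]
      ring
  have hPhi : Phi n t p q = ∑ i, q i * fF t (p i / q i) := by
    unfold Phi fF
    rw [if_neg ht0, if_neg ht1]
    have hterm : ∀ i, q i * ((t*(t-1))⁻¹ * ((p i / q i) ^ t - 1))
        = (t*(t-1))⁻¹ * ((p i) ^ t * (q i) ^ (1-t) - q i) := by
      intro i
      have h1 : (p i / q i) ^ t = p i ^ t / q i ^ t := Real.div_rpow (hp i).le (hq i).le t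
      have h2 : q i ^ (1-t) = q i / q i ^ t := by
        rw [Real.rpow_sub (hq i), Real.rpow_one]
      have h3 := (Real.rpow_pos_of_pos (hq i) t).ne'
      rw [h1, h2]
      field_simp
    rw [Finset.sum_congr rfl (fun i _ => hterm i), ← Finset.mul_sum,
      Finset.sum_sub_distrib, hq1]
  have hsum1 : ∑ i, q i • (p i / q i) = 1 := by
    rw [← hp1]
    exact Finset.sum_congr rfl fun i _ => by
      rw [smul_eq_mul, mul_div_cancel₀ _ (hq i).ne']
  constructor
  · -- lower bound
    have hconv := convex_low hs0 hs4 ht hst hr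
    have hJ := hconv.map_sum_le (fun i _ => (hq i).le) hq1 (fun i _ => (hbound i).1)
    rw [hsum1] at hJ
    simp only [gG_one, fF_one, mul_zero, sub_zero, smul_eq_mul] at hJ
    have hexp : ∑ i, q i * (gG s (p i / q i) - eta s t r * fF t (p i / q i))
        = (∑ i, q i * gG s (p i / q i)) - eta s t r * (∑ i, q i * fF t (p i / q i)) := by
      rw [Finset.mul_sum, ← Finset.sum_sub_distrib]
      exact Finset.sum_congr rfl fun i _ => by ring
    rw [hexp] at hJ
    show eta s t r * Phi n t p q ≤ zeta n s q p
    rw [hPhi, hzeta]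
    linarith
  · -- upper bound
    have hconv := convex_high hs0 hs4 ht hst hR
    have hJ := hconv.map_sum_le (fun i _ => (hq i).le) hq1
      (fun i _ => Set.mem_Ioc.2 ⟨hx i, (hbound i).2⟩)
    rw [hsum1] at hJ
    simp only [gG_one, fF_one, mul_zero, zero_sub, neg_zero, sub_zero, smul_eq_mul] at hJ
    have hexp : ∑ i, q i * (eta s t R * fF t (p i / q i) - gG s (p i / q i))
        = eta s t R * (∑ i, q i * fF t (p i / q i)) - (∑ i, q i * gG s (p i / q i)) := by
      rw [Finset.mul_sum, ← Finset.sum_sub_distrib]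
      exact Finset.sum_congr rfl fun i _ => by ring
    rw [hexp] at hJ
    show zeta n s q p ≤ eta s t R * Phi n t p q
    rw [hPhi, hzeta]
    linarith
end

section
/- Let s, t ∈ ℝ with 0 ≤ s ≤ 4, t ≥ −1, and s + t ≥ 2. Then for all P, Q ∈ Γ_n with r ≤ p_i/q_i ≤ R for all i: ((R+1)/(2R))^{s−3} (((4−s)R + s)/(4R^{t+2})) Φ_t(P||Q) ≤ ζ_s(Q||P) ≤ ((r+1)/(2r))^{s−3} (((4−s)r + s)/(4r^{t+2})) Φ_t(P||Q). -/
open Real Finset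

noncomputable def Gaux (s x : ℝ) : ℝ :=
  if s = 1 then (1 - x) * Real.log ((1 + x) / (2 * x))
  else (s - 1)⁻¹ * ((1 - x) * ((1 + x) / (2 * x)) ^ (s - 1) + (x - 1))

noncomputable def Gaux1 (s x : ℝ) : ℝ :=
  if s = 1 then -Real.log ((1 + x) / (2 * x)) - (1 - x) / (x * (1 + x))
  else (s - 1)⁻¹ * (1 - ((1 + x) / (2 * x)) ^ (s - 1)) - (1 - x) * ((1 + x) / (2 * x)) ^ (s - 2) / (2 * x ^ 2)

noncomputable def Gaux2 (s x : ℝ) : ℝ :=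
  ((1 + x) / (2 * x)) ^ (s - 3) * ((4 - s) * x + s) / (4 * x ^ 4)

noncomputable def Faux (t x : ℝ) : ℝ :=
  if t = 0 then -Real.log x + (x - 1)
  else if t = 1 then x * Real.log x - (x - 1)
  else (t * (t - 1))⁻¹ * (x ^ t - 1 - t * (x - 1))

noncomputable def Faux1 (t x : ℝ) : ℝ :=
  if t = 0 then 1 - 1 / x
  else if t = 1 then Real.log x
  else (t - 1)⁻¹ * (x ^ (t - 1) - 1)

noncomputable def Faux2 (t x : ℝ) : ℝ := x ^ (t - 2)

lemma w_pos {x : ℝ} (hx : 0 < x) : 0 < (1 + x) / (2 * x) := by positivity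

lemma hasDerivAt_w {x : ℝ} (hx : 0 < x) :
    HasDerivAt (fun y : ℝ => (1 + y) / (2 * y)) (-(1 / (2 * x ^ 2))) x := by
  have h : HasDerivAt (fun y : ℝ => (1 + y) / (2 * y))
      ((1 * (2 * x) - (1 + x) * (2 * 1)) / (2 * x) ^ 2) x := by
    exact (((hasDerivAt_id' x)).const_add 1).div
      (((hasDerivAt_id' x)).const_mul 2) (by positivity)
  convert h using 1
  field_simp
  ring

lemma hasDerivAt_Gaux {s x : ℝ} (hx : 0 < x) : HasDerivAt (Gaux s) (Gaux1 s x) x := by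
  have hw := hasDerivAt_w hx
  have hwpos := w_pos hx
  have h2x : (2 : ℝ) * x ≠ 0 := by positivity
  by_cases hs : s = 1
  · subst hs
    have hGs : Gaux 1 = fun y : ℝ => (1 - y) * Real.log ((1 + y) / (2 * y)) := by
      funext y; simp [Gaux]
    rw [hGs]
    simp only [Gaux1, if_pos rfl, ↓reduceIte]
    have hlog : HasDerivAt (fun y : ℝ => Real.log ((1 + y) / (2 * y)))
        (-(1 / (2 * x ^ 2)) / ((1 + x) / (2 * x))) x := hw.log (ne_of_gt hwpos)
    have h1 : HasDerivAt (fun y : ℝ => (1 - y) * Real.log ((1 + y) / (2 * y)))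
        ((-1) * Real.log ((1 + x) / (2 * x)) + (1 - x) * (-(1 / (2 * x ^ 2)) / ((1 + x) / (2 * x)))) x := by
      exact ((hasDerivAt_id' x).const_sub 1).mul hlog
    refine h1.congr_deriv (Eq.symm ?_)
    have h1x : (1 : ℝ) + x ≠ 0 := by positivity
    field_simp
    ring
  · have hGs : Gaux s = fun y : ℝ =>
        (s - 1)⁻¹ * ((1 - y) * ((1 + y) / (2 * y)) ^ (s - 1) + (y - 1)) := by
      funext y; simp [Gaux, hs]
    rw [hGs]
    simp only [Gaux1, if_neg hs]
    have hwr : HasDerivAt (fun y : ℝ => ((1 + y) / (2 * y)) ^ (s - 1))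
        (-(1 / (2 * x ^ 2)) * (s - 1) * ((1 + x) / (2 * x)) ^ (s - 1 - 1)) x :=
      hw.rpow_const (Or.inl (ne_of_gt hwpos))
    have h1 : HasDerivAt (fun y : ℝ => (1 - y) * ((1 + y) / (2 * y)) ^ (s - 1))
        ((-1) * ((1 + x) / (2 * x)) ^ (s - 1) +
          (1 - x) * (-(1 / (2 * x ^ 2)) * (s - 1) * ((1 + x) / (2 * x)) ^ (s - 1 - 1))) x :=
      ((hasDerivAt_id' x).const_sub 1).mul hwr
    have h2 : HasDerivAt (fun y : ℝ =>
        (s - 1)⁻¹ * ((1 - y) * ((1 + y) / (2 * y)) ^ (s - 1) + (y - 1)))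
        ((s - 1)⁻¹ * (((-1) * ((1 + x) / (2 * x)) ^ (s - 1) +
          (1 - x) * (-(1 / (2 * x ^ 2)) * (s - 1) * ((1 + x) / (2 * x)) ^ (s - 1 - 1))) + 1)) x :=
      ((h1.add ((hasDerivAt_id' x).sub_const 1)).const_mul _)
    convert h2 using 1
    have hs1 : s - 1 ≠ 0 := sub_ne_zero.mpr hs
    have he : s - 1 - 1 = s - 2 := by ring
    rw [he]
    field_simp
    ring

lemma hasDerivAt_Gaux1 {s x : ℝ} (hx : 0 < x) : HasDerivAt (Gaux1 s) (Gaux2 s x) x := by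
  have hw := hasDerivAt_w hx
  have hwpos := w_pos hx
  have h2x : (2 : ℝ) * x ≠ 0 := by positivity
  have h1x : (1 : ℝ) + x ≠ 0 := by positivity
  have hxne : x ≠ 0 := ne_of_gt hx
  by_cases hs : s = 1
  · subst hs
    have hGs : Gaux1 1 = fun y : ℝ =>
        -Real.log ((1 + y) / (2 * y)) - (1 - y) / (y * (1 + y)) := by
      funext y; simp [Gaux1]
    rw [hGs]
    have hlog : HasDerivAt (fun y : ℝ => -Real.log ((1 + y) / (2 * y)))
        (-(-(1 / (2 * x ^ 2)) / ((1 + x) / (2 * x)))) x := (hw.log (ne_of_gt hwpos)).neg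
    have hden : HasDerivAt (fun y : ℝ => y * (1 + y)) (1 * (1 + x) + x * 1) x :=
      (hasDerivAt_id' x).mul ((hasDerivAt_id' x).const_add 1)
    have hfrac : HasDerivAt (fun y : ℝ => (1 - y) / (y * (1 + y)))
        (((-1) * (x * (1 + x)) - (1 - x) * (1 * (1 + x) + x * 1)) / (x * (1 + x)) ^ 2) x :=
      ((hasDerivAt_id' x).const_sub 1).div hden (by positivity)
    have h := hlog.sub hfrac
    refine h.congr_deriv (Eq.symm ?_)
    have he : ((1 + x) / (2 * x)) ^ ((1:ℝ) - 3) = (((1 + x) / (2 * x)) ^ (2:ℕ))⁻¹ := by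
      rw [show (1:ℝ) - 3 = -((2:ℕ):ℝ) by norm_num, Real.rpow_neg hwpos.le, Real.rpow_natCast]
    rw [Gaux2, he]
    field_simp
    ring
  · have hGs : Gaux1 s = fun y : ℝ =>
        (s - 1)⁻¹ * (1 - ((1 + y) / (2 * y)) ^ (s - 1)) -
          (1 - y) * ((1 + y) / (2 * y)) ^ (s - 2) / (2 * y ^ 2) := by
      funext y; simp [Gaux1, hs]
    rw [hGs]
    have hwr1 : HasDerivAt (fun y : ℝ => ((1 + y) / (2 * y)) ^ (s - 1))
        (-(1 / (2 * x ^ 2)) * (s - 1) * ((1 + x) / (2 * x)) ^ (s - 1 - 1)) x :=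
      hw.rpow_const (Or.inl (ne_of_gt hwpos))
    have hwr2 : HasDerivAt (fun y : ℝ => ((1 + y) / (2 * y)) ^ (s - 2))
        (-(1 / (2 * x ^ 2)) * (s - 2) * ((1 + x) / (2 * x)) ^ (s - 2 - 1)) x :=
      hw.rpow_const (Or.inl (ne_of_gt hwpos))
    have hterm1 : HasDerivAt (fun y : ℝ => (s - 1)⁻¹ * (1 - ((1 + y) / (2 * y)) ^ (s - 1)))
        ((s - 1)⁻¹ * (-( -(1 / (2 * x ^ 2)) * (s - 1) * ((1 + x) / (2 * x)) ^ (s - 1 - 1)))) x :=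
      (hwr1.const_sub 1).const_mul _
    have hnum : HasDerivAt (fun y : ℝ => (1 - y) * ((1 + y) / (2 * y)) ^ (s - 2))
        ((-1) * ((1 + x) / (2 * x)) ^ (s - 2) +
          (1 - x) * (-(1 / (2 * x ^ 2)) * (s - 2) * ((1 + x) / (2 * x)) ^ (s - 2 - 1))) x :=
      ((hasDerivAt_id' x).const_sub 1).mul hwr2
    have hden : HasDerivAt (fun y : ℝ => 2 * y ^ 2) (2 * (2 * x ^ 1)) x :=
      (hasDerivAt_pow 2 x).const_mul 2
    have hfrac : HasDerivAt (fun y : ℝ => (1 - y) * ((1 + y) / (2 * y)) ^ (s - 2) / (2 * y ^ 2))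
        ((((-1) * ((1 + x) / (2 * x)) ^ (s - 2) +
          (1 - x) * (-(1 / (2 * x ^ 2)) * (s - 2) * ((1 + x) / (2 * x)) ^ (s - 2 - 1))) * (2 * x ^ 2)
          - (1 - x) * ((1 + x) / (2 * x)) ^ (s - 2) * (2 * (2 * x ^ 1))) / (2 * x ^ 2) ^ 2) x :=
      hnum.div hden (by positivity)
    have h := hterm1.sub hfrac
    refine h.congr_deriv (Eq.symm ?_)
    have hs1 : s - 1 ≠ 0 := sub_ne_zero.mpr hs
    have e1 : ((1 + x) / (2 * x)) ^ (s - 1 - 1) = ((1 + x) / (2 * x)) ^ (s - 3) * ((1 + x) / (2 * x)) := by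
      rw [show s - 1 - 1 = s - 3 + 1 by ring, Real.rpow_add hwpos, Real.rpow_one]
    have e2 : ((1 + x) / (2 * x)) ^ (s - 2 - 1) = ((1 + x) / (2 * x)) ^ (s - 3) := by
      congr 1; ring
    have e3 : ((1 + x) / (2 * x)) ^ (s - 2) = ((1 + x) / (2 * x)) ^ (s - 3) * ((1 + x) / (2 * x)) := by
      rw [show s - 2 = s - 3 + 1 by ring, Real.rpow_add hwpos, Real.rpow_one]
    rw [Gaux2, e1, e2, e3]
    field_simp
    ring

lemma hasDerivAt_Faux {t x : ℝ} (hx : 0 < x) : HasDerivAt (Faux t) (Faux1 t x) x := by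
  have hxne : x ≠ 0 := ne_of_gt hx
  by_cases ht0 : t = 0
  · subst ht0
    have hF : Faux 0 = fun y : ℝ => -Real.log y + (y - 1) := by funext y; simp [Faux]
    rw [hF]
    simp only [Faux1, if_pos rfl, ↓reduceIte]
    have h := ((Real.hasDerivAt_log hxne).neg).add ((hasDerivAt_id' x).sub_const 1)
    refine h.congr_deriv (Eq.symm ?_)
    field_simp
    ring
  · by_cases ht1 : t = 1
    · subst ht1
      have hF : Faux 1 = fun y : ℝ => y * Real.log y - (y - 1) := by funext y; simp [Faux]
      rw [hF]
      simp only [Faux1, if_neg one_ne_zero, if_pos rfl, ↓reduceIte]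
      have h := ((hasDerivAt_id' x).mul (Real.hasDerivAt_log hxne)).sub ((hasDerivAt_id' x).sub_const 1)
      refine h.congr_deriv (Eq.symm ?_)
      field_simp
      ring
    · have hF : Faux t = fun y : ℝ => (t * (t - 1))⁻¹ * (y ^ t - 1 - t * (y - 1)) := by
        funext y; simp [Faux, ht0, ht1]
      rw [hF]
      simp only [Faux1, if_neg ht0, if_neg ht1]
      have hr : HasDerivAt (fun y : ℝ => y ^ t) (t * x ^ (t - 1)) x :=
        Real.hasDerivAt_rpow_const (Or.inl hxne)
      have h := (((hr.sub_const 1).sub (((hasDerivAt_id' x).sub_const 1).const_mul t)).const_mul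
        (t * (t - 1))⁻¹)
      refine h.congr_deriv (Eq.symm ?_)
      have ht1' : t - 1 ≠ 0 := sub_ne_zero.mpr ht1
      field_simp

lemma hasDerivAt_Faux1 {t x : ℝ} (hx : 0 < x) : HasDerivAt (Faux1 t) (Faux2 t x) x := by
  have hxne : x ≠ 0 := ne_of_gt hx
  by_cases ht0 : t = 0
  · subst ht0
    have hF : Faux1 0 = fun y : ℝ => 1 - 1 / y := by funext y; simp [Faux1]
    rw [hF]
    have h := ((hasDerivAt_inv hxne).const_sub 1)
    have h2 : HasDerivAt (fun y : ℝ => 1 - 1 / y) (-(-(x ^ 2)⁻¹)) x := by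
      simpa [one_div] using h
    convert h2 using 1
    rw [Faux2, show (0:ℝ) - 2 = -((2:ℕ):ℝ) by norm_num, Real.rpow_neg hx.le, Real.rpow_natCast]
    simp
  · by_cases ht1 : t = 1
    · subst ht1
      have hF : Faux1 1 = fun y : ℝ => Real.log y := by funext y; simp [Faux1]
      rw [hF]
      convert Real.hasDerivAt_log hxne using 1
      rw [Faux2, show (1:ℝ) - 2 = -((1:ℕ):ℝ) by norm_num, Real.rpow_neg hx.le, Real.rpow_natCast]
      simp
    · have hF : Faux1 t = fun y : ℝ => (t - 1)⁻¹ * (y ^ (t - 1) - 1) := by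
        funext y; simp [Faux1, ht0, ht1]
      rw [hF]
      have hr : HasDerivAt (fun y : ℝ => y ^ (t - 1)) ((t - 1) * x ^ (t - 1 - 1)) x :=
        Real.hasDerivAt_rpow_const (Or.inl hxne)
      have h := (hr.sub_const 1).const_mul (t - 1)⁻¹
      refine h.congr_deriv (Eq.symm ?_)
      have ht1' : t - 1 ≠ 0 := sub_ne_zero.mpr ht1
      rw [Faux2, show t - 1 - 1 = t - 2 by ring]
      field_simp

lemma Gaux_one (s : ℝ) : Gaux s 1 = 0 := by
  by_cases hs : s = 1 <;> simp [Gaux, hs]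

lemma Gaux1_one (s : ℝ) : Gaux1 s 1 = 0 := by
  by_cases hs : s = 1 <;> simp [Gaux1, hs]

lemma Faux_one (t : ℝ) : Faux t 1 = 0 := by
  by_cases ht0 : t = 0
  · simp [Faux, ht0]
  by_cases ht1 : t = 1 <;> simp [Faux, ht0, ht1]

lemma Faux1_one (t : ℝ) : Faux1 t 1 = 0 := by
  by_cases ht0 : t = 0
  · simp [Faux1, ht0]
  by_cases ht1 : t = 1 <;> simp [Faux1, ht0, ht1]

noncomputable def etaAux (s t x : ℝ) : ℝ :=
  ((x + 1) / (2 * x)) ^ (s - 3) * (((4 - s) * x + s) / (4 * x ^ (t + 2)))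

noncomputable def Laux (s t x : ℝ) : ℝ :=
  (s - 3) * (Real.log (1 + x) - Real.log 2 - Real.log x) +
    Real.log ((4 - s) * x + s) - (t + 2) * Real.log x

lemma lin_pos {s x : ℝ} (hs0 : 0 ≤ s) (hs4 : s ≤ 4) (hx : 0 < x) : 0 < (4 - s) * x + s := by
  rcases eq_or_lt_of_le hs0 with h | h
  · rw [← h]; norm_num; linarith [mul_pos (show (0:ℝ) < 4 by norm_num) hx]
  · have : 0 ≤ (4 - s) * x := mul_nonneg (by linarith) hx.le
    linarith

lemma etaAux_eq_exp {s t x : ℝ} (hs0 : 0 ≤ s) (hs4 : s ≤ 4) (hx : 0 < x) :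
    etaAux s t x = Real.exp (Laux s t x) / 4 := by
  have h1x : (0:ℝ) < 1 + x := by linarith
  have hlin := lin_pos hs0 hs4 hx
  have hwpos : (0:ℝ) < (x + 1) / (2 * x) := by positivity
  have e1 : ((x + 1) / (2 * x)) ^ (s - 3) =
      Real.exp ((s - 3) * (Real.log (1 + x) - Real.log 2 - Real.log x)) := by
    rw [Real.rpow_def_of_pos hwpos]
    congr 1
    rw [Real.log_div (by positivity) (by positivity), Real.log_mul (by norm_num) (ne_of_gt hx)]
    ring_nf
  have e2 : (4 - s) * x + s = Real.exp (Real.log ((4 - s) * x + s)) := (Real.exp_log hlin).symm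
  have e3 : x ^ (t + 2) = Real.exp ((t + 2) * Real.log x) := by
    rw [Real.rpow_def_of_pos hx, mul_comm]
  rw [etaAux, Laux, e1]
  rw [show Real.exp ((s - 3) * (Real.log (1 + x) - Real.log 2 - Real.log x) +
      Real.log ((4 - s) * x + s) - (t + 2) * Real.log x) =
    Real.exp ((s - 3) * (Real.log (1 + x) - Real.log 2 - Real.log x)) *
      Real.exp (Real.log ((4 - s) * x + s)) * (Real.exp ((t + 2) * Real.log x))⁻¹ by
    rw [← Real.exp_add, ← Real.exp_neg, ← Real.exp_add]; ring_nf]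
  rw [← e2, ← e3]
  have hxp : (0:ℝ) < x ^ (t + 2) := Real.rpow_pos_of_pos hx _
  field_simp

lemma hasDerivAt_Laux {s t x : ℝ} (hs0 : 0 ≤ s) (hs4 : s ≤ 4) (hx : 0 < x) :
    HasDerivAt (Laux s t)
      ((s - 3) * (1 / (1 + x) - 1 / x) + (4 - s) / ((4 - s) * x + s) - (t + 2) / x) x := by
  have hxne : x ≠ 0 := ne_of_gt hx
  have h1x : (1:ℝ) + x ≠ 0 := by positivity
  have hlin := lin_pos hs0 hs4 hx
  have hl1 : HasDerivAt (fun y : ℝ => Real.log (1 + y)) (1 / (1 + x)) x := by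
    have := (Real.hasDerivAt_log h1x).comp x ((hasDerivAt_id' x).const_add 1)
    exact this.congr_deriv (by ring)
  have hl2 : HasDerivAt (fun y : ℝ => Real.log ((4 - s) * y + s)) ((4 - s) / ((4 - s) * x + s)) x := by
    have hin : HasDerivAt (fun y : ℝ => (4 - s) * y + s) (4 - s) x := by
      simpa using ((hasDerivAt_id' x).const_mul (4 - s)).add_const s
    have := (Real.hasDerivAt_log (ne_of_gt hlin)).comp x hin
    exact this.congr_deriv (by ring)
  have h := ((((hl1.sub_const (Real.log 2)).sub (Real.hasDerivAt_log hxne)).const_mul (s - 3)).add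
      hl2).sub ((Real.hasDerivAt_log hxne).const_mul (t + 2))
  have hL : Laux s t = fun y : ℝ => (s - 3) * (Real.log (1 + y) - Real.log 2 - Real.log y) +
      Real.log ((4 - s) * y + s) - (t + 2) * Real.log y := by
    funext y; rfl
  rw [hL]
  refine h.congr_deriv (Eq.symm ?_)
  field_simp

lemma Laux_deriv_nonpos {s t x : ℝ} (hs0 : 0 ≤ s) (hs4 : s ≤ 4) (ht : -1 ≤ t)
    (hst : 2 ≤ s + t) (hx : 0 < x) :
    (s - 3) * (1 / (1 + x) - 1 / x) + (4 - s) / ((4 - s) * x + s) - (t + 2) / x ≤ 0 := by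
  have h1x : (0:ℝ) < 1 + x := by linarith
  have hlin := lin_pos hs0 hs4 hx
  have key : (3 - s) * ((4 - s) * x + s) + (4 - s) * (x * (1 + x))
      - (t + 2) * ((1 + x) * ((4 - s) * x + s)) ≤ 0 := by
    nlinarith [mul_nonneg (mul_nonneg (show (0:ℝ) ≤ 4 - s by linarith) (show (0:ℝ) ≤ t + 1 by linarith)) (sq_nonneg x),
      mul_nonneg (show (0:ℝ) ≤ s by linarith) (show (0:ℝ) ≤ s + t - 1 by linarith),
      mul_nonneg (mul_nonneg (show (0:ℝ) ≤ s by linarith) (show (0:ℝ) ≤ 4 - s by linarith)) hx.le,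
      mul_pos hx h1x, sq_nonneg (4 - s), hx.le]
  have hrw : (s - 3) * (1 / (1 + x) - 1 / x) + (4 - s) / ((4 - s) * x + s) - (t + 2) / x =
      ((3 - s) * ((4 - s) * x + s) + (4 - s) * (x * (1 + x))
        - (t + 2) * ((1 + x) * ((4 - s) * x + s))) / (x * (1 + x) * ((4 - s) * x + s)) := by
    have hlin' : x * (4 - s) + s ≠ 0 := by rw [mul_comm]; exact hlin.ne'
    field_simp
    ring
  rw [hrw]
  exact div_nonpos_of_nonpos_of_nonneg key (by positivity)

lemma Laux_antitone {s t r R : ℝ} (hs0 : 0 ≤ s) (hs4 : s ≤ 4) (ht : -1 ≤ t)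
    (hst : 2 ≤ s + t) (hr : 0 < r) :
    AntitoneOn (Laux s t) (Set.Icc r R) := by
  have hderiv : ∀ x ∈ Set.Icc r R, HasDerivAt (Laux s t)
      ((s - 3) * (1 / (1 + x) - 1 / x) + (4 - s) / ((4 - s) * x + s) - (t + 2) / x) x :=
    fun x hx => hasDerivAt_Laux hs0 hs4 (lt_of_lt_of_le hr hx.1)
  apply antitoneOn_of_deriv_nonpos (convex_Icc r R)
  · exact fun x hx => (hderiv x hx).continuousAt.continuousWithinAt
  · intro x hx
    rw [interior_Icc] at hx
    exact (hderiv x ⟨hx.1.le, hx.2.le⟩).differentiableAt.differentiableWithinAt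
  · intro x hx
    rw [interior_Icc] at hx
    rw [(hderiv x ⟨hx.1.le, hx.2.le⟩).deriv]
    exact Laux_deriv_nonpos hs0 hs4 ht hst (lt_of_lt_of_le hr hx.1.le)

lemma etaAux_le {s t r R x : ℝ} (hs0 : 0 ≤ s) (hs4 : s ≤ 4) (ht : -1 ≤ t)
    (hst : 2 ≤ s + t) (hr : 0 < r) (hx : x ∈ Set.Icc r R) :
    etaAux s t R ≤ etaAux s t x ∧ etaAux s t x ≤ etaAux s t r := by
  have hxpos : 0 < x := lt_of_lt_of_le hr hx.1
  have hRpos : 0 < R := lt_of_lt_of_le hxpos hx.2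
  have hrR : r ≤ R := le_trans hx.1 hx.2
  have hRmem : R ∈ Set.Icc r R := ⟨hrR, le_refl R⟩
  have hrmem : r ∈ Set.Icc r R := ⟨le_refl r, hrR⟩
  have hA := Laux_antitone (R := R) hs0 hs4 ht hst hr
  constructor
  · rw [etaAux_eq_exp hs0 hs4 hRpos, etaAux_eq_exp hs0 hs4 hxpos]
    have := Real.exp_le_exp.mpr (hA hx hRmem hx.2)
    linarith
  · rw [etaAux_eq_exp hs0 hs4 hxpos, etaAux_eq_exp hs0 hs4 hr]
    have := Real.exp_le_exp.mpr (hA hrmem hx hx.1)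
    linarith

lemma Gaux2_eq_eta {s t x : ℝ} (hx : 0 < x) : Gaux2 s x = etaAux s t x * Faux2 t x := by
  have h4 : x ^ (t + 2) = x ^ (t - 2) * x ^ (4 : ℕ) := by
    rw [← Real.rpow_natCast x 4, ← Real.rpow_add hx]
    congr 1; ring
  have hxp : (0:ℝ) < x ^ (t - 2) := Real.rpow_pos_of_pos hx _
  rw [Gaux2, etaAux, Faux2, h4, show x + 1 = 1 + x by ring]
  have hx4 : (0:ℝ) < x ^ (4:ℕ) := by positivity
  field_simp

lemma nonneg_of_taylor {φ φ1 φ2 : ℝ → ℝ} {r R x : ℝ}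
    (hx : x ∈ Set.Icc r R) (h1 : 1 ∈ Set.Icc r R)
    (hd1 : ∀ y ∈ Set.Icc r R, HasDerivAt φ (φ1 y) y)
    (hd2 : ∀ y ∈ Set.Icc r R, HasDerivAt φ1 (φ2 y) y)
    (h2 : ∀ y ∈ Set.Icc r R, 0 ≤ φ2 y)
    (hφ0 : φ 1 = 0) (hφ10 : φ1 1 = 0) : 0 ≤ φ x := by
  have hmono : MonotoneOn φ1 (Set.Icc r R) := by
    apply monotoneOn_of_deriv_nonneg (convex_Icc r R)
    · exact fun y hy => (hd2 y hy).continuousAt.continuousWithinAt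
    · intro y hy
      rw [interior_Icc] at hy
      exact (hd2 y ⟨hy.1.le, hy.2.le⟩).differentiableAt.differentiableWithinAt
    · intro y hy
      rw [interior_Icc] at hy
      rw [(hd2 y ⟨hy.1.le, hy.2.le⟩).deriv]
      exact h2 y ⟨hy.1.le, hy.2.le⟩
  rcases le_total 1 x with h1x | h1x
  · have hsub : Set.Icc (1:ℝ) x ⊆ Set.Icc r R := Set.Icc_subset_Icc h1.1 hx.2
    have hmφ : MonotoneOn φ (Set.Icc 1 x) := by
      apply monotoneOn_of_deriv_nonneg (convex_Icc 1 x)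
      · exact fun y hy => (hd1 y (hsub hy)).continuousAt.continuousWithinAt
      · intro y hy
        rw [interior_Icc] at hy
        exact (hd1 y (hsub ⟨hy.1.le, hy.2.le⟩)).differentiableAt.differentiableWithinAt
      · intro y hy
        rw [interior_Icc] at hy
        have hymem : y ∈ Set.Icc r R := hsub ⟨hy.1.le, hy.2.le⟩
        rw [(hd1 y hymem).deriv]
        have := hmono h1 hymem hy.1.le
        rw [hφ10] at this
        exact this
    have := hmφ ⟨le_refl 1, h1x⟩ ⟨h1x, le_refl x⟩ h1x
    rw [hφ0] at this
    exact this
  · have hsub : Set.Icc x (1:ℝ) ⊆ Set.Icc r R := Set.Icc_subset_Icc hx.1 h1.2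
    have hmφ : AntitoneOn φ (Set.Icc x 1) := by
      apply antitoneOn_of_deriv_nonpos (convex_Icc x 1)
      · exact fun y hy => (hd1 y (hsub hy)).continuousAt.continuousWithinAt
      · intro y hy
        rw [interior_Icc] at hy
        exact (hd1 y (hsub ⟨hy.1.le, hy.2.le⟩)).differentiableAt.differentiableWithinAt
      · intro y hy
        rw [interior_Icc] at hy
        have hymem : y ∈ Set.Icc r R := hsub ⟨hy.1.le, hy.2.le⟩
        rw [(hd1 y hymem).deriv]
        have := hmono hymem h1 hy.2.le
        rw [hφ10] at this
        exact this
    have := hmφ ⟨le_refl x, h1x⟩ ⟨h1x, le_refl 1⟩ h1x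
    rw [hφ0] at this
    exact this

lemma pointwise_bounds {s t r R x : ℝ} (hs0 : 0 ≤ s) (hs4 : s ≤ 4) (ht : -1 ≤ t)
    (hst : 2 ≤ s + t) (hr : 0 < r) (hx : x ∈ Set.Icc r R) (h1 : 1 ∈ Set.Icc r R) :
    etaAux s t R * Faux t x ≤ Gaux s x ∧ Gaux s x ≤ etaAux s t r * Faux t x := by
  have hpos : ∀ y ∈ Set.Icc r R, 0 < y := fun y hy => lt_of_lt_of_le hr hy.1
  constructor
  · have h := nonneg_of_taylor (φ := fun y => Gaux s y - etaAux s t R * Faux t y)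
      (φ1 := fun y => Gaux1 s y - etaAux s t R * Faux1 t y)
      (φ2 := fun y => Gaux2 s y - etaAux s t R * Faux2 t y) hx h1
      (fun y hy => (hasDerivAt_Gaux (hpos y hy)).sub ((hasDerivAt_Faux (hpos y hy)).const_mul _))
      (fun y hy => (hasDerivAt_Gaux1 (hpos y hy)).sub ((hasDerivAt_Faux1 (hpos y hy)).const_mul _))
      ?_ (by simp [Gaux_one, Faux_one]) (by simp [Gaux1_one, Faux1_one])
    · have h' : (0:ℝ) ≤ Gaux s x - etaAux s t R * Faux t x := h
      linarith
    · intro y hy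
      have hy0 := hpos y hy
      have h2pos : (0:ℝ) < Faux2 t y := Real.rpow_pos_of_pos hy0 _
      have heta := (etaAux_le hs0 hs4 ht hst hr hy).1
      show (0:ℝ) ≤ Gaux2 s y - etaAux s t R * Faux2 t y
      rw [Gaux2_eq_eta (t := t) hy0]
      simp only [sub_nonneg]
      exact mul_le_mul_of_nonneg_right heta h2pos.le
  · have h := nonneg_of_taylor (φ := fun y => etaAux s t r * Faux t y - Gaux s y)
      (φ1 := fun y => etaAux s t r * Faux1 t y - Gaux1 s y)
      (φ2 := fun y => etaAux s t r * Faux2 t y - Gaux2 s y) hx h1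
      (fun y hy => ((hasDerivAt_Faux (hpos y hy)).const_mul _).sub (hasDerivAt_Gaux (hpos y hy)))
      (fun y hy => ((hasDerivAt_Faux1 (hpos y hy)).const_mul _).sub (hasDerivAt_Gaux1 (hpos y hy)))
      ?_ (by simp [Gaux_one, Faux_one]) (by simp [Gaux1_one, Faux1_one])
    · have h' : (0:ℝ) ≤ etaAux s t r * Faux t x - Gaux s x := h
      linarith
    · intro y hy
      have hy0 := hpos y hy
      have h2pos : (0:ℝ) < Faux2 t y := Real.rpow_pos_of_pos hy0 _
      have heta := (etaAux_le hs0 hs4 ht hst hr hy).2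
      show (0:ℝ) ≤ etaAux s t r * Faux2 t y - Gaux2 s y
      rw [Gaux2_eq_eta (t := t) hy0]
      simp only [sub_nonneg]
      exact mul_le_mul_of_nonneg_right heta h2pos.le

lemma zeta_eq_sum {n : ℕ} {s : ℝ} {p q : Fin n → ℝ}
    (hp : ∀ i, 0 < p i) (hq : ∀ i, 0 < q i)
    (hp1 : ∑ i, p i = 1) (hq1 : ∑ i, q i = 1) :
    zeta n s q p = ∑ i, q i * Gaux s (p i / q i) := by
  have harg : ∀ i, (1 + p i / q i) / (2 * (p i / q i)) = (q i + p i) / (2 * p i) := by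
    intro i
    have hpi := (hp i).ne'
    have hqi := (hq i).ne'
    field_simp
    skip
  by_cases hs : s = 1
  · subst hs
    rw [zeta, if_pos rfl]
    apply Finset.sum_congr rfl
    intro i _
    have hpi := (hp i).ne'
    have hqi := (hq i).ne'
    rw [Gaux, if_pos rfl, harg i]
    have : q i * ((1 - p i / q i) * Real.log ((q i + p i) / (2 * p i))) =
        (q i - p i) * Real.log ((q i + p i) / (2 * p i)) := by
      field_simp
      skip
    rw [this]
  · rw [zeta, if_neg hs]
    have hpt : ∀ i, q i * Gaux s (p i / q i) =
        (s - 1)⁻¹ * ((q i - p i) * ((q i + p i) / (2 * p i)) ^ (s - 1)) +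
          (s - 1)⁻¹ * (p i - q i) := by
      intro i
      have hpi := (hp i).ne'
      have hqi := (hq i).ne'
      rw [Gaux, if_neg hs, harg i]
      have hs1 : s - 1 ≠ 0 := sub_ne_zero.mpr hs
      field_simp
    rw [Finset.sum_congr rfl (fun i _ => hpt i), Finset.sum_add_distrib,
      ← Finset.mul_sum, ← Finset.mul_sum, Finset.sum_sub_distrib, hp1, hq1]
    simp

lemma Phi_eq_sum {n : ℕ} {t : ℝ} {p q : Fin n → ℝ}
    (hp : ∀ i, 0 < p i) (hq : ∀ i, 0 < q i)
    (hp1 : ∑ i, p i = 1) (hq1 : ∑ i, q i = 1) :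
    Phi n t p q = ∑ i, q i * Faux t (p i / q i) := by
  by_cases ht0 : t = 0
  · subst ht0
    rw [Phi, if_pos rfl]
    have hpt : ∀ i, q i * Faux 0 (p i / q i) =
        q i * Real.log (q i / p i) + (p i - q i) := by
      intro i
      have hpi := (hp i).ne'
      have hqi := (hq i).ne'
      rw [Faux, if_pos rfl]
      rw [Real.log_div hpi hqi]
      have hl : Real.log (q i / p i) = Real.log (q i) - Real.log (p i) :=
        Real.log_div hqi hpi
      rw [hl]
      field_simp
      ring
    rw [Finset.sum_congr rfl (fun i _ => hpt i), Finset.sum_add_distrib,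
      Finset.sum_sub_distrib, hp1, hq1]
    simp
  · by_cases ht1 : t = 1
    · subst ht1
      rw [Phi, if_neg one_ne_zero, if_pos rfl]
      have hpt : ∀ i, q i * Faux 1 (p i / q i) =
          p i * Real.log (p i / q i) - (p i - q i) := by
        intro i
        have hpi := (hp i).ne'
        have hqi := (hq i).ne'
        rw [Faux, if_neg one_ne_zero, if_pos rfl]
        field_simp
        skip
      rw [Finset.sum_congr rfl (fun i _ => hpt i), Finset.sum_sub_distrib,
        Finset.sum_sub_distrib, hp1, hq1]
      simp
    · rw [Phi, if_neg ht0, if_neg ht1]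
      have hpt : ∀ i, q i * Faux t (p i / q i) =
          (t * (t - 1))⁻¹ * (p i ^ t * q i ^ (1 - t)) - (t * (t - 1))⁻¹ * q i -
            (t * (t - 1))⁻¹ * t * (p i - q i) := by
        intro i
        have hpi := hp i
        have hqi := hq i
        rw [Faux, if_neg ht0, if_neg ht1]
        have hrp : (p i / q i) ^ t = p i ^ t / q i ^ t := Real.div_rpow hpi.le hqi.le t
        have hq1t : q i ^ (1 - t) = q i / q i ^ t := by
          rw [Real.rpow_sub hqi, Real.rpow_one]
        have hqt : (0:ℝ) < q i ^ t := Real.rpow_pos_of_pos hqi _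
        rw [hrp, hq1t]
        have ht1' : t - 1 ≠ 0 := sub_ne_zero.mpr ht1
        field_simp
      rw [Finset.sum_congr rfl (fun i _ => hpt i), Finset.sum_sub_distrib,
        Finset.sum_sub_distrib, ← Finset.mul_sum, ← Finset.mul_sum, ← Finset.mul_sum,
        Finset.sum_sub_distrib, hp1, hq1]
      ring


theorem stmt_10 (s t : ℝ) (hs0 : 0 ≤ s) (hs4 : s ≤ 4) (ht : -1 ≤ t) (hst : 2 ≤ s + t)
    (n : ℕ) (hn : 2 ≤ n) (p q : Fin n → ℝ)
    (hp : ∀ i, 0 < p i) (hq : ∀ i, 0 < q i)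
    (hp1 : ∑ i, p i = 1) (hq1 : ∑ i, q i = 1)
    (r R : ℝ) (hr : 0 < r) (hrR : r ≤ R)
    (hbound : ∀ i, r ≤ p i / q i ∧ p i / q i ≤ R) :
    ((R + 1) / (2 * R)) ^ (s - 3) * (((4 - s) * R + s) / (4 * R ^ (t + 2))) * Phi n t p q ≤ zeta n s q p ∧
      zeta n s q p ≤ ((r + 1) / (2 * r)) ^ (s - 3) * (((4 - s) * r + s) / (4 * r ^ (t + 2))) * Phi n t p q := by
  have hzeta : zeta n s q p = ∑ i, q i * Gaux s (p i / q i) := zeta_eq_sum hp hq hp1 hq1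
  have hPhi : Phi n t p q = ∑ i, q i * Faux t (p i / q i) := Phi_eq_sum hp hq hp1 hq1
  have hqx : ∀ i, q i * (p i / q i) = p i := by
    intro i
    rw [mul_div_assoc']
    exact mul_div_cancel_left₀ (p i) (hq i).ne'
  have hr1 : r ≤ 1 := by
    have h1 : ∑ i, q i * r ≤ ∑ i, q i * (p i / q i) :=
      Finset.sum_le_sum fun i _ => mul_le_mul_of_nonneg_left (hbound i).1 (hq i).le
    rw [Finset.sum_congr rfl fun i _ => hqx i, hp1, ← Finset.sum_mul, hq1, one_mul] at h1
    exact h1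
  have h1R : 1 ≤ R := by
    have h1 : ∑ i, q i * (p i / q i) ≤ ∑ i, q i * R :=
      Finset.sum_le_sum fun i _ => mul_le_mul_of_nonneg_left (hbound i).2 (hq i).le
    rw [Finset.sum_congr rfl fun i _ => hqx i, hp1, ← Finset.sum_mul, hq1, one_mul] at h1
    exact h1
  have h1mem : (1:ℝ) ∈ Set.Icc r R := ⟨hr1, h1R⟩
  have hxmem : ∀ i, p i / q i ∈ Set.Icc r R := fun i => ⟨(hbound i).1, (hbound i).2⟩
  have hptw : ∀ i, etaAux s t R * Faux t (p i / q i) ≤ Gaux s (p i / q i) ∧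
      Gaux s (p i / q i) ≤ etaAux s t r * Faux t (p i / q i) :=
    fun i => pointwise_bounds hs0 hs4 ht hst hr (hxmem i) h1mem
  constructor
  · have hL : ((R + 1) / (2 * R)) ^ (s - 3) * (((4 - s) * R + s) / (4 * R ^ (t + 2))) * Phi n t p q
        = ∑ i, q i * (etaAux s t R * Faux t (p i / q i)) := by
      rw [hPhi, Finset.mul_sum]
      exact Finset.sum_congr rfl fun i _ => by rw [etaAux]; ring
    rw [hL, hzeta]
    exact Finset.sum_le_sum fun i _ =>
      mul_le_mul_of_nonneg_left (hptw i).1 (hq i).le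
  · have hL : ((r + 1) / (2 * r)) ^ (s - 3) * (((4 - s) * r + s) / (4 * r ^ (t + 2))) * Phi n t p q
        = ∑ i, q i * (etaAux s t r * Faux t (p i / q i)) := by
      rw [hPhi, Finset.mul_sum]
      exact Finset.sum_congr rfl fun i _ => by rw [etaAux]; ring
    rw [hL, hzeta]
    exact Finset.sum_le_sum fun i _ =>
      mul_le_mul_of_nonneg_left (hptw i).2 (hq i).le
end
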